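/- arXiv:1004.3046 — 5 statements merged into one kernel-verified Lean document; each statement's English description precedes it below -/
import Mathlib

section
/- Let N ≥ 1, p > 2 and 1 ≤ q < 2. Let f : ℝ^N → ℝ be a measurable function such that f² is locally integrable and sup_{x ∈ ℝ^N} W_{2/3,3}^{f²}(x, R₀) < ∞ for some R₀ > 0. Then |f|^q belongs to the nonlinear Kato class K_p, that is, lim_{R → 0} sup_{x ∈ ℝ^N} W_p^{|f|^q}(x, R) = 0. -/
open MeasureTheory Metric Set Filter
open scoped Topology ENNReal

/-- The Wolff potential `W_{β,p}^f(x,R)`. -/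
noncomputable def wolff (N : ℕ) (β p : ℝ) (f : EuclideanSpace ℝ (Fin N) → ℝ)
    (x : EuclideanSpace ℝ (Fin N)) (R : ℝ) : ℝ :=
  ∫ r in Set.Ioo (0:ℝ) R,
    (1/r) * ((r ^ (β*p - (N:ℝ)) * ∫ y in Metric.ball x r, f y) ^ (1/(p-1)))

namespace KatoAux

variable {N : ℕ} {f : EuclideanSpace ℝ (Fin N) → ℝ} {q : ℝ}

/-- The integrand of the hypothesis Wolff potential `W_{2/3,3}^{f²}`. -/
noncomputable def katoG (f : EuclideanSpace ℝ (Fin N) → ℝ)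
    (x : EuclideanSpace ℝ (Fin N)) (s : ℝ) : ℝ :=
  (1/s) * ((s ^ ((2:ℝ) - N) * ∫ y in ball x s, (f y) ^ 2) ^ ((1:ℝ)/2))

lemma kato_wolff_eq (f : EuclideanSpace ℝ (Fin N) → ℝ) (x : EuclideanSpace ℝ (Fin N)) (R₀ : ℝ) :
    wolff N (2/3) 3 (fun y => (f y)^2) x R₀ = ∫ s in Set.Ioo (0:ℝ) R₀, katoG f x s := by
  unfold wolff katoG
  norm_num

lemma kato_int_cb (hf2 : LocallyIntegrable (fun y => (f y) ^ 2))
    (x : EuclideanSpace ℝ (Fin N)) (r : ℝ) :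
    IntegrableOn (fun y => (f y) ^ 2) (closedBall x r) :=
  hf2.integrableOn_isCompact (isCompact_closedBall x r)

lemma kato_int_ball (hf2 : LocallyIntegrable (fun y => (f y) ^ 2))
    (x : EuclideanSpace ℝ (Fin N)) (r : ℝ) :
    IntegrableOn (fun y => (f y) ^ 2) (ball x r) :=
  (kato_int_cb hf2 x r).mono_set ball_subset_closedBall

lemma kato_A_mono (hf2 : LocallyIntegrable (fun y => (f y) ^ 2))
    (x : EuclideanSpace ℝ (Fin N)) :
    Monotone (fun r => ∫ y in ball x r, (f y) ^ 2) := by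
  intro r r' hrr'
  exact setIntegral_mono_set (kato_int_ball hf2 x r')
    (Eventually.of_forall fun y => sq_nonneg _)
    (HasSubset.Subset.eventuallyLE (ball_subset_ball hrr'))

lemma kato_ball_le_cb (hf2 : LocallyIntegrable (fun y => (f y) ^ 2))
    (x : EuclideanSpace ℝ (Fin N)) (r : ℝ) :
    (∫ y in ball x r, (f y) ^ 2) ≤ ∫ y in closedBall x r, (f y) ^ 2 :=
  setIntegral_mono_set (kato_int_cb hf2 x r)
    (Eventually.of_forall fun y => sq_nonneg _)
    (HasSubset.Subset.eventuallyLE ball_subset_closedBall)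

lemma kato_g_meas (hf2 : LocallyIntegrable (fun y => (f y) ^ 2))
    (x : EuclideanSpace ℝ (Fin N)) : Measurable (katoG f x) :=
  (measurable_const.div measurable_id).mul
    (((measurable_id.pow measurable_const).mul (kato_A_mono hf2 x).measurable).pow
      measurable_const)

lemma kato_pow_cmp {r s : ℝ} (N : ℕ) (hr : 0 < r) (h1 : r ≤ s) (h2 : s ≤ 2*r) :
    (2:ℝ)^(-(N:ℝ)) * r^((2:ℝ)-N) ≤ s^((2:ℝ)-N) := by
  have hs : 0 < s := lt_of_lt_of_le hr h1
  have hrnn : (0:ℝ) ≤ r ^ ((2:ℝ)-N) := Real.rpow_nonneg hr.le _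
  rcases le_total (N:ℝ) 2 with hc | hc
  · have he : (0:ℝ) ≤ 2 - N := by linarith
    have h3 : r ^ ((2:ℝ)-N) ≤ s ^ ((2:ℝ)-N) := Real.rpow_le_rpow hr.le h1 he
    have h4 : (2:ℝ)^(-(N:ℝ)) ≤ 1 :=
      Real.rpow_le_one_of_one_le_of_nonpos one_le_two (neg_nonpos.mpr (Nat.cast_nonneg N))
    nlinarith
  · have he : (2:ℝ) - N ≤ 0 := by linarith
    have h3 : (2*r) ^ ((2:ℝ)-N) ≤ s ^ ((2:ℝ)-N) :=
      Real.rpow_le_rpow_of_nonpos hs h2 he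
    have h4 : (2*r) ^ ((2:ℝ)-N) = (2:ℝ)^((2:ℝ)-N) * r^((2:ℝ)-N) :=
      Real.mul_rpow (by norm_num) hr.le
    have h5 : (2:ℝ)^(-(N:ℝ)) ≤ (2:ℝ)^((2:ℝ)-N) :=
      Real.rpow_le_rpow_of_exponent_le one_le_two (by linarith)
    nlinarith

lemma kato_dyadic (hf2 : LocallyIntegrable (fun y => (f y) ^ 2))
    (x : EuclideanSpace ℝ (Fin N)) {M R₀ : ℝ}
    (hM : ∫ s in Set.Ioo (0:ℝ) R₀, katoG f x s ≤ M)
    (hint : IntegrableOn (katoG f x) (Set.Ioo (0:ℝ) R₀))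
    {r : ℝ} (hr : 0 < r) (h2r : 2*r ≤ R₀) :
    (∫ y in ball x r, (f y) ^ 2) ≤ (2:ℝ)^(N:ℝ) * (2*M)^2 * r^((N:ℝ)-2) := by
  set A := ∫ y in ball x r, (f y) ^ 2 with hA
  have hA0 : 0 ≤ A := integral_nonneg fun y => sq_nonneg _
  set X := (2:ℝ)^(-(N:ℝ)) * (r^((2:ℝ)-N) * A) with hX
  have hX0 : 0 ≤ X := by positivity
  set c := (1/(2*r)) * X ^ ((1:ℝ)/2) with hc
  have hsub : Set.Ioo r (2*r) ⊆ Set.Ioo (0:ℝ) R₀ := fun s hs =>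
    ⟨lt_trans hr hs.1, lt_of_lt_of_le hs.2 h2r⟩
  -- pointwise lower bound on Ioo r 2r
  have step1 : ∀ s ∈ Set.Ioo r (2*r), c ≤ katoG f x s := by
    intro s hs
    have hs0 : 0 < s := lt_trans hr hs.1
    have hbase : X ≤ s ^ ((2:ℝ)-N) * ∫ y in ball x s, (f y) ^ 2 := by
      have h1 := kato_pow_cmp N hr hs.1.le hs.2.le
      have h2 : A ≤ ∫ y in ball x s, (f y) ^ 2 := kato_A_mono hf2 x hs.1.le
      have h3 : (0:ℝ) ≤ (2:ℝ)^(-(N:ℝ)) * r^((2:ℝ)-N) := by positivity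
      calc X = ((2:ℝ)^(-(N:ℝ)) * r^((2:ℝ)-N)) * A := by ring
        _ ≤ s ^ ((2:ℝ)-N) * ∫ y in ball x s, (f y) ^ 2 :=
          mul_le_mul h1 h2 hA0 (Real.rpow_nonneg hs0.le _)
    have h4 : X ^ ((1:ℝ)/2) ≤ (s ^ ((2:ℝ)-N) * ∫ y in ball x s, (f y) ^ 2) ^ ((1:ℝ)/2) :=
      Real.rpow_le_rpow hX0 hbase (by norm_num)
    have h5 : (1:ℝ)/(2*r) ≤ 1/s := by
      apply one_div_le_one_div_of_le hs0 hs.2.le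
    exact mul_le_mul h5 h4 (Real.rpow_nonneg hX0 _) (by positivity)
  -- integrate
  have step2 : c * r ≤ M := by
    have hIoo : (volume (Set.Ioo r (2*r))).toReal = r := by
      rw [Real.volume_Ioo, ENNReal.toReal_ofReal (by linarith)]; ring
    have h6 : ∫ _s in Set.Ioo r (2*r), c ≤ ∫ s in Set.Ioo r (2*r), katoG f x s := by
      apply setIntegral_mono_on (integrableOn_const (by
        rw [Real.volume_Ioo]; exact ENNReal.ofReal_ne_top))
        (hint.mono_set hsub) measurableSet_Ioo step1
    rw [setIntegral_const, measureReal_def, hIoo, smul_eq_mul] at h6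
    have h7 : ∫ s in Set.Ioo r (2*r), katoG f x s ≤ ∫ s in Set.Ioo (0:ℝ) R₀, katoG f x s := by
      apply setIntegral_mono_set hint ?_ (HasSubset.Subset.eventuallyLE hsub)
      filter_upwards [ae_restrict_mem measurableSet_Ioo] with s hs
      have hs0 : 0 < s := hs.1
      have : (0:ℝ) ≤ (s ^ ((2:ℝ)-N) * ∫ y in ball x s, (f y) ^ 2) := by
        have : (0:ℝ) ≤ ∫ y in ball x s, (f y)^2 := integral_nonneg fun y => sq_nonneg _
        positivity
      unfold katoG; positivity
    calc c * r = r * c := by ring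
      _ ≤ M := le_trans h6 (le_trans h7 hM)
  -- unfold c and conclude
  have hsq : X ^ ((1:ℝ)/2) ≤ 2*M := by
    have : c * r = (1/2) * X ^ ((1:ℝ)/2) := by
      rw [hc]; field_simp
    nlinarith [step2, this]
  have hXle : X ≤ (2*M)^2 := by
    have hXeq : X = (X ^ ((1:ℝ)/2))^2 := by
      rw [← Real.rpow_natCast (X ^ ((1:ℝ)/2)) 2, ← Real.rpow_mul hX0]
      norm_num
    calc X = (X ^ ((1:ℝ)/2))^2 := hXeq
      _ ≤ (2*M)^2 := pow_le_pow_left₀ (Real.rpow_nonneg hX0 _) hsq 2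
  -- A = 2^N r^{N-2} X
  have hAX : A = (2:ℝ)^(N:ℝ) * r^((N:ℝ)-2) * X := by
    rw [hX]
    have h21 : (2:ℝ)^(N:ℝ) * (2:ℝ)^(-(N:ℝ)) = 1 := by
      rw [← Real.rpow_add (by norm_num)]; simp
    have hr1 : r^((N:ℝ)-2) * r^((2:ℝ)-N) = 1 := by
      rw [← Real.rpow_add hr]; norm_num
    calc A = ((2:ℝ)^(N:ℝ) * (2:ℝ)^(-(N:ℝ))) * ((r^((N:ℝ)-2) * r^((2:ℝ)-N)) * A) := by
          rw [h21, hr1]; ring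
      _ = (2:ℝ)^(N:ℝ) * r^((N:ℝ)-2) * ((2:ℝ)^(-(N:ℝ)) * (r^((2:ℝ)-N) * A)) := by ring
  rw [hAX]
  have h2N : (0:ℝ) ≤ (2:ℝ)^(N:ℝ) := Real.rpow_nonneg (by norm_num) _
  have hrN : (0:ℝ) ≤ r^((N:ℝ)-2) := Real.rpow_nonneg hr.le _
  calc (2:ℝ)^(N:ℝ) * r^((N:ℝ)-2) * X ≤ (2:ℝ)^(N:ℝ) * r^((N:ℝ)-2) * (2*M)^2 :=
        mul_le_mul_of_nonneg_left hXle (by positivity)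
    _ = (2:ℝ)^(N:ℝ) * (2*M)^2 * r^((N:ℝ)-2) := by ring

lemma kato_avg (hf2 : LocallyIntegrable (fun y => (f y) ^ 2)) :
    ∀ᵐ x : EuclideanSpace ℝ (Fin N),
      Tendsto (fun s => ⨍ y in closedBall x s, (f y) ^ 2) (𝓝[>] (0:ℝ)) (𝓝 ((f x) ^ 2)) := by
  filter_upwards [IsUnifLocDoublingMeasure.ae_tendsto_average (μ := volume) hf2 1] with x hx
  exact hx (fun _ => x) id tendsto_id (by
    filter_upwards [self_mem_nhdsWithin] with s (hs : (0:ℝ) < s)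
    exact mem_closedBall_self (by simpa using hs.le))

lemma kato_ae_integrable (hN : 1 ≤ N) (hf2 : LocallyIntegrable (fun y => (f y) ^ 2))
    {R₀ : ℝ} (hR₀ : 0 < R₀) :
    ∀ᵐ x : EuclideanSpace ℝ (Fin N), IntegrableOn (katoG f x) (Set.Ioo (0:ℝ) R₀) := by
  haveI : NeZero N := ⟨by omega⟩
  set V := (volume (closedBall (0:EuclideanSpace ℝ (Fin N)) 1)).toReal with hV
  have hVpos : 0 < V :=
    ENNReal.toReal_pos (measure_closedBall_pos volume _ one_pos).ne'
      measure_closedBall_lt_top.ne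
  filter_upwards [kato_avg hf2] with x hx
  have hev : ∀ᶠ s in 𝓝[>] (0:ℝ), (⨍ y in closedBall x s, (f y) ^ 2) < (f x)^2 + 1 :=
    hx.eventually_lt_const (by linarith [sq_nonneg (f x)])
  rw [eventually_nhdsWithin_iff, Metric.eventually_nhds_iff] at hev
  obtain ⟨δ₁, hδ₁, hev⟩ := hev
  set δ₂ := min (δ₁/2) (R₀/2) with hδ₂
  have hδ₂0 : 0 < δ₂ := by positivity
  set B1 := (V * ((f x)^2 + 1)) ^ ((1:ℝ)/2) with hB1
  set AR := ∫ y in closedBall x R₀, (f y) ^ 2 with hAR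
  have hAR0 : 0 ≤ AR := integral_nonneg fun y => sq_nonneg _
  set B2 := (1/δ₂) * ((δ₂ ^ ((2:ℝ)-N) + R₀ ^ ((2:ℝ)-N)) * AR) ^ ((1:ℝ)/2) with hB2
  have hB10 : 0 ≤ B1 := Real.rpow_nonneg (by positivity) _
  have hB20 : 0 ≤ B2 := by
    have h1 : (0:ℝ) ≤ δ₂ ^ ((2:ℝ)-N) := Real.rpow_nonneg hδ₂0.le _
    have h2 : (0:ℝ) ≤ R₀ ^ ((2:ℝ)-N) := Real.rpow_nonneg hR₀.le _
    positivity
  have hbound : ∀ s ∈ Set.Ioo (0:ℝ) R₀, katoG f x s ≤ B1 + B2 := by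
    intro s hs
    have hs0 : 0 < s := hs.1
    have hAs0 : (0:ℝ) ≤ ∫ y in ball x s, (f y) ^ 2 := integral_nonneg fun y => sq_nonneg _
    rcases lt_or_ge s δ₂ with hcase | hcase
    · -- small s : use the average bound
      have havg : (⨍ y in closedBall x s, (f y) ^ 2) < (f x)^2 + 1 := by
        apply hev _ hs0
        simp only [dist_zero_right, Real.norm_eq_abs, abs_of_pos hs0]
        calc s < δ₂ := hcase
          _ ≤ δ₁/2 := min_le_left _ _
          _ < δ₁ := by linarith
      have hcb : (volume (closedBall x s)).toReal = s^(N:ℕ) * V := by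
        rw [Measure.addHaar_closedBall' volume x hs0.le, finrank_euclideanSpace_fin,
          ENNReal.toReal_mul, ENNReal.toReal_ofReal (by positivity)]
      have hμ0 : (volume (closedBall x s)).toReal ≠ 0 := by
        rw [hcb]; positivity
      have hib : (∫ y in closedBall x s, (f y) ^ 2)
          = (volume (closedBall x s)).toReal * ⨍ y in closedBall x s, (f y) ^ 2 := by
        rw [setAverage_eq, smul_eq_mul, measureReal_def]
        field_simp
      have hAs : (∫ y in ball x s, (f y) ^ 2) ≤ s^(N:ℕ) * (V * ((f x)^2 + 1)) := by
        refine le_trans (kato_ball_le_cb hf2 x s) ?_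
        rw [hib, hcb]
        have := mul_le_mul_of_nonneg_left havg.le
          (mul_nonneg (by positivity : (0:ℝ) ≤ s^(N:ℕ)) hVpos.le)
        nlinarith
      have hkey : s ^ ((2:ℝ)-N) * ∫ y in ball x s, (f y) ^ 2
          ≤ s ^ (2:ℝ) * (V * ((f x)^2 + 1)) := by
        have h1 : s ^ ((2:ℝ)-N) * (s^(N:ℕ) * (V * ((f x)^2 + 1)))
            = s ^ (2:ℝ) * (V * ((f x)^2 + 1)) := by
          rw [← Real.rpow_natCast s N, ← mul_assoc, ← Real.rpow_add hs0]
          norm_num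
        calc s ^ ((2:ℝ)-N) * ∫ y in ball x s, (f y) ^ 2
            ≤ s ^ ((2:ℝ)-N) * (s^(N:ℕ) * (V * ((f x)^2 + 1))) :=
              mul_le_mul_of_nonneg_left hAs (Real.rpow_nonneg hs0.le _)
          _ = s ^ (2:ℝ) * (V * ((f x)^2 + 1)) := h1
      have hrpow : (s ^ ((2:ℝ)-N) * ∫ y in ball x s, (f y) ^ 2) ^ ((1:ℝ)/2)
          ≤ s * B1 := by
        have h2 : (s ^ (2:ℝ) * (V * ((f x)^2 + 1))) ^ ((1:ℝ)/2) = s * B1 := by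
          rw [Real.mul_rpow (Real.rpow_nonneg hs0.le _) (by positivity), hB1,
            ← Real.rpow_mul hs0.le]
          norm_num
        rw [← h2]
        exact Real.rpow_le_rpow (by positivity) hkey (by norm_num)
      calc katoG f x s ≤ (1/s) * (s * B1) := by
            unfold katoG
            exact mul_le_mul_of_nonneg_left hrpow (by positivity)
        _ = B1 := by field_simp
        _ ≤ B1 + B2 := by linarith
    · -- large s
      have h1s : (1:ℝ)/s ≤ 1/δ₂ := one_div_le_one_div_of_le hδ₂0 hcase
      have hpow : s ^ ((2:ℝ)-N) ≤ δ₂ ^ ((2:ℝ)-N) + R₀ ^ ((2:ℝ)-N) := by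
        rcases le_total (N:ℝ) 2 with hc | hc
        · have he : (0:ℝ) ≤ 2 - N := by linarith
          have := Real.rpow_le_rpow hs0.le hs.2.le he
          have := Real.rpow_nonneg hδ₂0.le ((2:ℝ)-N)
          linarith
        · have he : (2:ℝ) - N ≤ 0 := by linarith
          have := Real.rpow_le_rpow_of_nonpos hδ₂0 hcase he
          have := Real.rpow_nonneg hR₀.le ((2:ℝ)-N)
          linarith
      have hAs : (∫ y in ball x s, (f y) ^ 2) ≤ AR :=
        le_trans (kato_A_mono hf2 x hs.2.le) (kato_ball_le_cb hf2 x R₀)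
      have hbase : s ^ ((2:ℝ)-N) * (∫ y in ball x s, (f y) ^ 2)
          ≤ (δ₂ ^ ((2:ℝ)-N) + R₀ ^ ((2:ℝ)-N)) * AR :=
        mul_le_mul hpow hAs hAs0 (by positivity)
      calc katoG f x s ≤ (1/δ₂) * (((δ₂ ^ ((2:ℝ)-N) + R₀ ^ ((2:ℝ)-N)) * AR) ^ ((1:ℝ)/2)) := by
            unfold katoG
            exact mul_le_mul h1s
              (Real.rpow_le_rpow (by positivity) hbase (by norm_num))
              (Real.rpow_nonneg (by positivity) _) (by positivity)
        _ = B2 := hB2.symm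
        _ ≤ B1 + B2 := by linarith
  -- conclude integrability
  refine Integrable.mono' (g := fun _ => B1 + B2)
    (integrableOn_const (by rw [Real.volume_Ioo]; exact ENNReal.ofReal_ne_top))
    ((kato_g_meas hf2 x).aestronglyMeasurable) ?_
  filter_upwards [ae_restrict_mem measurableSet_Ioo] with s hs
  have hs0 : 0 < s := hs.1
  have hg0 : 0 ≤ katoG f x s := by
    have hAs0 : (0:ℝ) ≤ ∫ y in ball x s, (f y) ^ 2 := integral_nonneg fun y => sq_nonneg _
    unfold katoG
    positivity
  rw [Real.norm_eq_abs, abs_of_nonneg hg0]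
  exact hbound s hs

lemma kato_transfer (hN : 1 ≤ N) (hf2 : LocallyIntegrable (fun y => (f y) ^ 2))
    {M R₀ : ℝ} (hR₀ : 0 < R₀)
    (hM : ∀ x, ∫ s in Set.Ioo (0:ℝ) R₀, katoG f x s ≤ M) :
    ∀ (x : EuclideanSpace ℝ (Fin N)) (r : ℝ), 0 < r → 4*r ≤ R₀ →
      (∫ y in ball x r, (f y) ^ 2)
        ≤ ((2:ℝ)^(N:ℝ) * (2*M)^2 * (2:ℝ)^(N:ℝ)) * r^((N:ℝ)-2) := by
  intro x r hr h4r
  have hae := kato_ae_integrable hN hf2 hR₀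
  have hpos : volume (ball x r) ≠ 0 := (measure_ball_pos volume x hr).ne'
  have hex : ∃ x' ∈ ball x r, IntegrableOn (katoG f x') (Set.Ioo (0:ℝ) R₀) := by
    by_contra hcon
    push_neg at hcon
    have hsub : ball x r ⊆ {x' | ¬ IntegrableOn (katoG f x') (Set.Ioo (0:ℝ) R₀)} :=
      fun x' hx' => hcon x' hx'
    exact hpos (measure_mono_null hsub hae)
  obtain ⟨x', hx', hint⟩ := hex
  have hball : ball x r ⊆ ball x' (2*r) := by
    intro y hy
    have h1 : dist y x < r := mem_ball.mp hy
    have h2 : dist x x' < r := by rw [dist_comm]; exact mem_ball.mp hx'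
    have := dist_triangle y x x'
    exact mem_ball.mpr (by linarith)
  have hA : (∫ y in ball x r, (f y) ^ 2) ≤ ∫ y in ball x' (2*r), (f y) ^ 2 :=
    setIntegral_mono_set (kato_int_ball hf2 x' (2*r))
      (Eventually.of_forall fun y => sq_nonneg _)
      (HasSubset.Subset.eventuallyLE hball)
  have hdy := kato_dyadic hf2 x' (hM x') hint (by linarith : (0:ℝ) < 2*r)
    (by linarith : 2*(2*r) ≤ R₀)
  have hsplit : (2*r) ^ ((N:ℝ)-2) = (2:ℝ)^((N:ℝ)-2) * r^((N:ℝ)-2) :=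
    Real.mul_rpow (by norm_num) hr.le
  have h2le : (2:ℝ)^((N:ℝ)-2) ≤ (2:ℝ)^(N:ℝ) :=
    Real.rpow_le_rpow_of_exponent_le one_le_two (by linarith)
  have hC0 : (0:ℝ) ≤ (2:ℝ)^(N:ℝ) * (2*M)^2 := by positivity
  have hrN : (0:ℝ) ≤ r^((N:ℝ)-2) := Real.rpow_nonneg hr.le _
  calc (∫ y in ball x r, (f y) ^ 2) ≤ (2:ℝ)^(N:ℝ) * (2*M)^2 * (2*r)^((N:ℝ)-2) :=
        le_trans hA hdy
    _ = ((2:ℝ)^(N:ℝ) * (2*M)^2) * ((2:ℝ)^((N:ℝ)-2) * r^((N:ℝ)-2)) := by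
        rw [hsplit]
    _ ≤ ((2:ℝ)^(N:ℝ) * (2*M)^2) * ((2:ℝ)^(N:ℝ) * r^((N:ℝ)-2)) := by
        apply mul_le_mul_of_nonneg_left _ hC0
        exact mul_le_mul_of_nonneg_right h2le hrN
    _ = ((2:ℝ)^(N:ℝ) * (2*M)^2 * (2:ℝ)^(N:ℝ)) * r^((N:ℝ)-2) := by ring

lemma kato_int_q (hq1 : 1 ≤ q) (hq2 : q < 2) (hf : Measurable f)
    (hf2 : LocallyIntegrable (fun y => (f y) ^ 2))
    (x : EuclideanSpace ℝ (Fin N)) (r : ℝ) :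
    IntegrableOn (fun y => |f y| ^ q) (ball x r) := by
  have hmaj : ∀ y : EuclideanSpace ℝ (Fin N), |f y| ^ q ≤ 1 + (f y)^2 := by
    intro y
    rcases le_total (|f y|) 1 with h | h
    · have := Real.rpow_le_one (abs_nonneg _) h (by linarith : (0:ℝ) ≤ q)
      nlinarith [sq_nonneg (f y)]
    · have h1 : |f y| ^ q ≤ |f y| ^ (2:ℝ) :=
        Real.rpow_le_rpow_of_exponent_le h (by linarith)
      have h2 : |f y| ^ (2:ℝ) = (f y)^2 := by
        rw [show ((2:ℝ)) = ((2:ℕ):ℝ) by norm_num, Real.rpow_natCast]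
        exact sq_abs (f y)
      nlinarith
  refine Integrable.mono' (g := fun y => 1 + (f y)^2)
    (by simpa only [Pi.add_def, IntegrableOn] using
      (integrableOn_const (C := (1:ℝ)) measure_ball_lt_top.ne enorm_ne_top).add (kato_int_ball hf2 x r))
    ?_ ?_
  · exact ((hf.abs.pow measurable_const).aestronglyMeasurable)
  · filter_upwards with y
    rw [Real.norm_eq_abs, abs_of_nonneg (Real.rpow_nonneg (abs_nonneg _) _)]
    exact hmaj y

lemma kato_holder (hq1 : 1 ≤ q) (hq2 : q < 2) (hf : Measurable f)
    (hf2 : LocallyIntegrable (fun y => (f y) ^ 2))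
    (x : EuclideanSpace ℝ (Fin N)) (r : ℝ) :
    (∫ y in ball x r, |f y| ^ q)
      ≤ (∫ y in ball x r, (f y)^2) ^ (q/2) * ((volume (ball x r)).toReal) ^ (1 - q/2) := by
  set μ := volume.restrict (ball x r) with hμ
  have hq0 : 0 < q := by linarith
  have hpq : Real.HolderConjugate (2/q) (2/(2-q)) := by
    refine ⟨by rw [inv_div, inv_div, inv_one]; ring, div_pos two_pos hq0, div_pos two_pos (by linarith)⟩
  set F : EuclideanSpace ℝ (Fin N) → ℝ≥0∞ := fun y => ENNReal.ofReal (|f y| ^ q) with hF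
  have hFmeas : AEMeasurable F μ := (hf.abs.pow measurable_const).ennreal_ofReal.aemeasurable
  have hG : AEMeasurable (fun _ : EuclideanSpace ℝ (Fin N) => (1:ℝ≥0∞)) μ := aemeasurable_const
  have hH := ENNReal.lintegral_mul_le_Lp_mul_Lq μ hpq hFmeas hG
  simp only [mul_one, ENNReal.one_rpow, lintegral_one, Measure.restrict_apply MeasurableSet.univ,
    Set.univ_inter] at hH
  have hμuniv : μ univ = volume (ball x r) := Measure.restrict_apply_univ _
  rw [hμuniv] at hH
  have habs2 : ∀ y : EuclideanSpace ℝ (Fin N), |f y| ^ (2:ℝ) = (f y)^2 := by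
    intro y
    rw [show ((2:ℝ)) = ((2:ℕ):ℝ) by norm_num, Real.rpow_natCast]
    exact sq_abs (f y)
  have hFp : ∀ y, F y ^ ((2:ℝ)/q) = ENNReal.ofReal ((f y)^2) := by
    intro y
    rw [hF, ENNReal.ofReal_rpow_of_nonneg (Real.rpow_nonneg (abs_nonneg _) _) (by positivity),
      ← Real.rpow_mul (abs_nonneg _), mul_div_cancel₀ _ (by linarith : q ≠ 0)]
    rw [habs2 y]
  simp only [hFp] at hH
  have he1 : (1:ℝ)/(2/q) = q/2 := one_div_div _ _
  have he2 : (1:ℝ)/(2/(2-q)) = (2-q)/2 := one_div_div _ _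
  rw [he1, he2] at hH
  have h2int : ∫⁻ y, ENNReal.ofReal ((f y)^2) ∂μ = ENNReal.ofReal (∫ y in ball x r, (f y)^2) :=
    (ofReal_integral_eq_lintegral_ofReal (kato_int_ball hf2 x r)
      (Eventually.of_forall fun y => sq_nonneg _)).symm
  rw [h2int] at hH
  have hqint : ∫ y in ball x r, |f y| ^ q = (∫⁻ y, F y ∂μ).toReal := by
    rw [integral_eq_lintegral_of_nonneg_ae
      (Eventually.of_forall fun y => Real.rpow_nonneg (abs_nonneg _) _)
      ((hf.abs.pow measurable_const).aestronglyMeasurable)]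
  have hRHSne : (ENNReal.ofReal (∫ y in ball x r, (f y)^2)) ^ (q/2)
      * (volume (ball x r)) ^ ((2-q)/2) ≠ ⊤ := by
    apply ENNReal.mul_ne_top
    · exact ENNReal.rpow_ne_top_of_nonneg (by linarith) ENNReal.ofReal_ne_top
    · exact ENNReal.rpow_ne_top_of_nonneg (by linarith) measure_ball_lt_top.ne
  have hmono := ENNReal.toReal_mono hRHSne hH
  rw [ENNReal.toReal_mul, ← ENNReal.toReal_rpow, ← ENNReal.toReal_rpow,
    ENNReal.toReal_ofReal (integral_nonneg fun y => sq_nonneg _)] at hmono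
  rw [hqint]
  have : (1:ℝ) - q/2 = (2-q)/2 := by ring
  rw [this]
  simpa using hmono

lemma kato_pt (hN : 1 ≤ N) {p : ℝ} (hp : 2 < p) (hq1 : 1 ≤ q) (hq2 : q < 2)
    (hf : Measurable f) (hf2 : LocallyIntegrable (fun y => (f y) ^ 2))
    {C₁ : ℝ} (hC₁ : 0 ≤ C₁) (x : EuclideanSpace ℝ (Fin N)) {r : ℝ} (hr : 0 < r)
    (hA : (∫ y in ball x r, (f y)^2) ≤ C₁ * r^((N:ℝ)-2)) :
    (1/r) * ((r ^ (1*p - (N:ℝ)) * ∫ y in ball x r, |f y| ^ q) ^ (1/(p-1)))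
      ≤ (C₁^(q/2) * ((volume (ball (0:EuclideanSpace ℝ (Fin N)) 1)).toReal)^(1-q/2))^(1/(p-1))
        * r ^ ((1-q)/(p-1)) := by
  haveI : NeZero N := ⟨by omega⟩
  set v' := ((volume (ball (0:EuclideanSpace ℝ (Fin N)) 1)).toReal) with hv'
  have hv'0 : 0 ≤ v' := ENNReal.toReal_nonneg
  set D := C₁^(q/2) * v'^(1-q/2) with hD
  have hD0 : 0 ≤ D := mul_nonneg (Real.rpow_nonneg hC₁ _) (Real.rpow_nonneg hv'0 _)
  set B := ∫ y in ball x r, |f y| ^ q with hB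
  have hB0 : 0 ≤ B := integral_nonneg fun y => Real.rpow_nonneg (abs_nonneg _) _
  have hA0 : 0 ≤ ∫ y in ball x r, (f y)^2 := integral_nonneg fun y => sq_nonneg _
  have hvol : (volume (ball x r)).toReal = r^((N:ℝ)) * v' := by
    rw [Measure.addHaar_ball volume x hr.le, finrank_euclideanSpace_fin,
      ENNReal.toReal_mul, ENNReal.toReal_ofReal (by positivity), ← Real.rpow_natCast r N]
  have hBle : B ≤ D * r^((N:ℝ)-q) := by
    have h1 : (∫ y in ball x r, (f y)^2) ^ (q/2) ≤ C₁^(q/2) * r^(((N:ℝ)-2)*(q/2)) := by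
      rw [Real.rpow_mul hr.le, ← Real.mul_rpow hC₁ (Real.rpow_nonneg hr.le _)]
      exact Real.rpow_le_rpow hA0 hA (by linarith)
    have h2 : ((volume (ball x r)).toReal) ^ (1-q/2) = r^((N:ℝ)*(1-q/2)) * v'^(1-q/2) := by
      rw [hvol, Real.mul_rpow (Real.rpow_nonneg hr.le _) hv'0, Real.rpow_mul hr.le]
    calc B ≤ (∫ y in ball x r, (f y)^2) ^ (q/2) * ((volume (ball x r)).toReal) ^ (1 - q/2) :=
          kato_holder hq1 hq2 hf hf2 x r
      _ ≤ (C₁^(q/2) * r^(((N:ℝ)-2)*(q/2))) * (r^((N:ℝ)*(1-q/2)) * v'^(1-q/2)) := by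
          rw [h2]
          apply mul_le_mul_of_nonneg_right h1
          exact mul_nonneg (Real.rpow_nonneg hr.le _) (Real.rpow_nonneg hv'0 _)
      _ = D * (r^(((N:ℝ)-2)*(q/2)) * r^((N:ℝ)*(1-q/2))) := by ring
      _ = D * r^((N:ℝ)-q) := by
          rw [← Real.rpow_add hr]
          ring_nf
  have hinner : r ^ (1*p - (N:ℝ)) * B ≤ D * r^(p-q) := by
    calc r ^ (1*p - (N:ℝ)) * B ≤ r ^ (1*p - (N:ℝ)) * (D * r^((N:ℝ)-q)) :=
          mul_le_mul_of_nonneg_left hBle (Real.rpow_nonneg hr.le _)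
      _ = D * (r ^ (p - (N:ℝ)) * r^((N:ℝ)-q)) := by rw [one_mul]; ring
      _ = D * r^(p-q) := by rw [← Real.rpow_add hr]; ring_nf
  have h3 : (r ^ (1*p - (N:ℝ)) * B) ^ (1/(p-1)) ≤ D^(1/(p-1)) * r^((p-q)*(1/(p-1))) := by
    rw [Real.rpow_mul hr.le, ← Real.mul_rpow hD0 (Real.rpow_nonneg hr.le _)]
    exact Real.rpow_le_rpow (mul_nonneg (Real.rpow_nonneg hr.le _) hB0) hinner
      (by have h : (0:ℝ) < p - 1 := by linarith
          positivity)
  have hfin : (1/r) * (D^(1/(p-1)) * r^((p-q)*(1/(p-1))))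
      = D^(1/(p-1)) * r ^ ((1-q)/(p-1)) := by
    have hp1 : p - 1 ≠ 0 := by linarith
    have hexp : (1-q)/(p-1) = (p-q)*(1/(p-1)) - 1 := by
      field_simp
      ring
    rw [hexp, Real.rpow_sub hr, Real.rpow_one]
    field_simp
  calc (1/r) * ((r ^ (1*p - (N:ℝ)) * B) ^ (1/(p-1)))
      ≤ (1/r) * (D^(1/(p-1)) * r^((p-q)*(1/(p-1)))) :=
        mul_le_mul_of_nonneg_left h3 (by positivity)
    _ = D^(1/(p-1)) * r ^ ((1-q)/(p-1)) := hfin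

end KatoAux

open KatoAux in
/-- If `sup_x W_{2/3,3}^{f²}(x,R₀) < ∞` for some `R₀ > 0` and `p > 2`, `1 ≤ q < 2`,
then `|f|^q` is in the nonlinear Kato class `K_p`: `lim_{R→0} sup_x W_p^{|f|^q}(x,R) = 0`. -/
theorem abs_pow_mem_kato {N : ℕ} (hN : 1 ≤ N) (p q : ℝ) (hp : 2 < p)
    (hq1 : 1 ≤ q) (hq2 : q < 2)
    (f : EuclideanSpace ℝ (Fin N) → ℝ) (hf : Measurable f)
    (hf2 : LocallyIntegrable (fun y => (f y) ^ 2))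
    (R₀ : ℝ) (hR₀ : 0 < R₀)
    (hbdd : ∃ M : ℝ, ∀ x, wolff N (2/3) 3 (fun y => (f y) ^ 2) x R₀ ≤ M) :
    ∀ ε > 0, ∃ δ > 0, ∀ R : ℝ, 0 < R → R < δ →
      ∀ x, wolff N 1 p (fun y => |f y| ^ q) x R < ε := by
  obtain ⟨M, hM⟩ := hbdd
  have hMk : ∀ x, ∫ s in Set.Ioo (0:ℝ) R₀, katoG f x s ≤ M := by
    intro x
    rw [← kato_wolff_eq f x R₀]
    exact hM x
  set C₁ := (2:ℝ)^(N:ℝ) * (2*M)^2 * (2:ℝ)^(N:ℝ) with hC₁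
  have hC₁0 : 0 ≤ C₁ := by positivity
  have htrans := kato_transfer hN hf2 hR₀ hMk
  set v' := ((volume (ball (0:EuclideanSpace ℝ (Fin N)) 1)).toReal) with hv'
  set C₄ := (C₁^(q/2) * v'^(1-q/2))^(1/(p-1)) with hC₄
  have hC₄0 : 0 ≤ C₄ :=
    Real.rpow_nonneg (mul_nonneg (Real.rpow_nonneg hC₁0 _)
      (Real.rpow_nonneg ENNReal.toReal_nonneg _)) _
  set α := (1-q)/(p-1) with hα
  have hp1 : (0:ℝ) < p - 1 := by linarith
  have hαgt : -1 < α := by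
    rw [hα, lt_div_iff₀ hp1]
    linarith
  have hα1 : 0 < α + 1 := by linarith
  intro ε hε
  have hcont : ContinuousAt (fun R : ℝ => C₄ * R ^ (α+1) / (α+1)) 0 := by
    exact ((Real.continuousAt_rpow_const 0 (α+1) (Or.inr hα1.le)).const_mul C₄).div_const _
  have hval : C₄ * (0:ℝ) ^ (α+1) / (α+1) = 0 := by
    rw [Real.zero_rpow hα1.ne']; ring
  have hev : ∀ᶠ R in 𝓝 (0:ℝ), C₄ * R ^ (α+1) / (α+1) < ε := by
    have h := hcont.tendsto
    rw [hval] at h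
    exact h.eventually_lt_const hε
  rw [Metric.eventually_nhds_iff] at hev
  obtain ⟨δ', hδ'0, hδ'⟩ := hev
  refine ⟨min δ' (R₀/4), by positivity, ?_⟩
  intro R hR0 hRδ x
  have hR4 : R ≤ R₀/4 := le_of_lt (lt_of_lt_of_le hRδ (min_le_right _ _))
  have hRδ' : R < δ' := lt_of_lt_of_le hRδ (min_le_left _ _)
  have hmaj_int : IntegrableOn (fun r : ℝ => C₄ * r ^ α) (Set.Ioo 0 R) := by
    have h := (intervalIntegral.intervalIntegrable_rpow' (a:=0) (b:=R) hαgt)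
    rw [intervalIntegrable_iff] at h
    have h2 : IntegrableOn (fun r : ℝ => r ^ α) (Set.Ioo 0 R) := by
      apply h.mono_set
      rw [Set.uIoc_of_le hR0.le]
      exact Set.Ioo_subset_Ioc_self
    exact h2.const_mul C₄
  have hmaj_val : ∫ r in Set.Ioo (0:ℝ) R, C₄ * r ^ α = C₄ * R^(α+1)/(α+1) := by
    rw [← integral_Ioc_eq_integral_Ioo, ← intervalIntegral.integral_of_le hR0.le,
      intervalIntegral.integral_const_mul, integral_rpow (Or.inl hαgt),
      Real.zero_rpow hα1.ne']
    ring
  have hptw : ∀ r ∈ Set.Ioo (0:ℝ) R,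
      (1/r) * ((r ^ (1*p - (N:ℝ)) * ∫ y in ball x r, |f y| ^ q) ^ (1/(p-1)))
      ≤ C₄ * r ^ α := by
    intro r hr
    exact kato_pt hN hp hq1 hq2 hf hf2 hC₁0 x hr.1
      (htrans x r hr.1 (by have := hr.2; linarith))
  have hw : wolff N 1 p (fun y => |f y| ^ q) x R ≤ ∫ r in Set.Ioo (0:ℝ) R, C₄ * r ^ α := by
    unfold wolff
    apply integral_mono_of_nonneg ?_ hmaj_int ?_
    · filter_upwards [ae_restrict_mem measurableSet_Ioo] with r hr
      have hr0 : 0 < r := hr.1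
      have hint0 : 0 ≤ ∫ y in ball x r, |f y| ^ q :=
        integral_nonneg fun y => Real.rpow_nonneg (abs_nonneg _) _
      exact mul_nonneg (by positivity)
        (Real.rpow_nonneg (mul_nonneg (Real.rpow_nonneg hr0.le _) hint0) _)
    · filter_upwards [ae_restrict_mem measurableSet_Ioo] with r hr
      exact hptw r hr
  calc wolff N 1 p (fun y => |f y| ^ q) x R ≤ ∫ r in Set.Ioo (0:ℝ) R, C₄ * r ^ α := hw
    _ = C₄ * R^(α+1)/(α+1) := hmaj_val
    _ < ε := hδ' (by rw [Real.dist_eq, sub_zero, abs_of_pos hR0]; exact hRδ')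
end

section
/- Let N ≥ 1, p ≥ 2, c₀ > 0 and f₁, g₁ ≥ 0 be real numbers, and set p' = p/(p−1). Let A : ℝ × ℝ^N → ℝ^N be continuously differentiable and suppose that for all (u, z) ∈ ℝ × ℝ^N: (i) ⟨∂_z A(u,z) μ, μ⟩ ≥ c₀ |z|^{p−2} |μ|² for all μ ∈ ℝ^N, and (ii) the operator norm of ∂_u A(u,z) is at most g₁ |z|^{p−2} + f₁. Then there exist constants c_p > 0 and Γ_p > 0, depending only on p and c₀, such that for all μ, μ̃ ∈ ℝ and all η, η̃ ∈ ℝ^N: ⟨A(μ, η) − A(μ̃, η̃), η − η̃⟩ ≥ c_p (|η| + |η̃|)^{p−2} |η − η̃|² − Γ_p ( f₁^{p'} |μ − μ̃|^{p'} + g₁² |η̃|^{p−2} |μ − μ̃|² + g₁² |η − η̃|^{p−2} |μ − μ̃|² ). -/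
open MeasureTheory Metric Set Filter
open scoped RealInnerProductSpace Topology

private lemma seg_cont {E : Type*} [NormedAddCommGroup E] [NormedSpace ℝ E]
    (p : ℝ) (hp2 : 0 ≤ p - 2) (y b : E) :
    Continuous fun s : ℝ => ‖y + s • b‖ ^ (p - 2) := by
  have h : Continuous fun s : ℝ => y + s • b :=
    continuous_const.add (continuous_id.smul continuous_const)
  exact h.norm.rpow_const fun s => Or.inr hp2

private lemma seg_lb_half {E : Type*} [NormedAddCommGroup E] [NormedSpace ℝ E]
    (p : ℝ) (hp2 : 0 ≤ p - 2) (x y : E) (hxy : ‖y‖ ≤ ‖x‖) :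
    (1/4) * (((‖x‖ + ‖y‖)/4) ^ (p-2)) ≤ ∫ s in (0:ℝ)..1, ‖y + s • (x - y)‖ ^ (p-2) := by
  have hwc : Continuous fun s : ℝ => ‖y + s • (x - y)‖ ^ (p-2) := seg_cont p hp2 y (x - y)
  have hnn : ∀ s ∈ Set.Icc (0:ℝ) (3/4), (0:ℝ) ≤ ‖y + s • (x - y)‖ ^ (p-2) :=
    fun s _ => Real.rpow_nonneg (norm_nonneg _) _
  have hpt : ∀ s ∈ Set.Icc (3/4:ℝ) 1,
      ((‖x‖ + ‖y‖)/4) ^ (p-2) ≤ ‖y + s • (x - y)‖ ^ (p-2) := by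
    intro s hs
    apply Real.rpow_le_rpow (by positivity) ?_ hp2
    have h1 : ‖s • x‖ - ‖-((1-s) • y)‖ ≤ ‖s • x - -((1-s) • y)‖ := norm_sub_norm_le _ _
    have h2 : s • x - -((1-s) • y) = y + s • (x - y) := by module
    rw [h2] at h1
    have hs0 : (0:ℝ) ≤ s := le_trans (by norm_num) hs.1
    have hs1 : (0:ℝ) ≤ 1 - s := by linarith [hs.2]
    rw [norm_neg, norm_smul, norm_smul, Real.norm_eq_abs, Real.norm_eq_abs,
      abs_of_nonneg hs0, abs_of_nonneg hs1] at h1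
    nlinarith [hs.1, hs.2, norm_nonneg x, norm_nonneg y, h1]
  have hi1 : IntervalIntegrable (fun s : ℝ => ‖y + s • (x - y)‖ ^ (p-2)) volume 0 (3/4) :=
    hwc.intervalIntegrable _ _
  have hi2 : IntervalIntegrable (fun s : ℝ => ‖y + s • (x - y)‖ ^ (p-2)) volume (3/4) 1 :=
    hwc.intervalIntegrable _ _
  have hsplit := intervalIntegral.integral_add_adjacent_intervals hi1 hi2
  have h01 : (0:ℝ) ≤ ∫ s in (0:ℝ)..(3/4), ‖y + s • (x - y)‖ ^ (p-2) :=
    intervalIntegral.integral_nonneg (by norm_num) hnn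
  have h02 : (1/4) * (((‖x‖ + ‖y‖)/4) ^ (p-2))
      ≤ ∫ s in (3/4:ℝ)..1, ‖y + s • (x - y)‖ ^ (p-2) := by
    have hmono := intervalIntegral.integral_mono_on (by norm_num : (3/4:ℝ) ≤ 1)
      intervalIntegrable_const hi2 hpt
    rw [intervalIntegral.integral_const, smul_eq_mul] at hmono
    calc (1/4) * (((‖x‖ + ‖y‖)/4) ^ (p-2))
        = ((1:ℝ) - 3/4) * (((‖x‖ + ‖y‖)/4) ^ (p-2)) := by norm_num
      _ ≤ _ := hmono
  linarith [hsplit, h01, h02]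

private lemma seg_lb {E : Type*} [NormedAddCommGroup E] [NormedSpace ℝ E]
    (p : ℝ) (hp2 : 0 ≤ p - 2) (η η' : E) :
    (1/4) * (((‖η‖ + ‖η'‖)/4) ^ (p-2)) ≤ ∫ s in (0:ℝ)..1, ‖η' + s • (η - η')‖ ^ (p-2) := by
  rcases le_total ‖η'‖ ‖η‖ with h | h
  · exact seg_lb_half p hp2 η η' h
  · have h2 := intervalIntegral.integral_comp_sub_left
      (a := 0) (b := 1) (fun s : ℝ => ‖η' + s • (η - η')‖ ^ (p-2)) 1
    rw [show (1:ℝ) - 1 = 0 by norm_num, show (1:ℝ) - 0 = 1 by norm_num] at h2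
    have h3 : (∫ s in (0:ℝ)..1, ‖η' + (1 - s) • (η - η')‖ ^ (p-2))
        = ∫ s in (0:ℝ)..1, ‖η + s • (η' - η)‖ ^ (p-2) := by
      apply intervalIntegral.integral_congr
      intro s _
      have he : η' + (1 - s) • (η - η') = η + s • (η' - η) := by module
      simp only [he]
    rw [h3] at h2
    rw [← h2]
    have := seg_lb_half p hp2 η' η h
    calc (1/4) * (((‖η‖ + ‖η'‖)/4) ^ (p-2))
        = (1/4) * (((‖η'‖ + ‖η‖)/4) ^ (p-2)) := by rw [add_comm]
      _ ≤ _ := this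

private lemma fderiv_split {E : Type*} [NormedAddCommGroup E] [NormedSpace ℝ E]
    (A : ℝ → E → E) (hA : ContDiff ℝ 1 fun q : ℝ × E => A q.1 q.2)
    (u : ℝ) (z : E) (a : ℝ) (b : E) :
    (fderiv ℝ (fun q : ℝ × E => A q.1 q.2) (u, z)) (a, b)
      = fderiv ℝ (fun v => A v z) u a + fderiv ℝ (fun w => A u w) z b := by
  have hd : HasFDerivAt (fun q : ℝ × E => A q.1 q.2)
      (fderiv ℝ (fun q : ℝ × E => A q.1 q.2) (u, z)) (u, z) :=
    (hA.differentiable one_ne_zero (u, z)).hasFDerivAt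
  have h1 : HasFDerivAt (fun v : ℝ => A v z)
      ((fderiv ℝ (fun q : ℝ × E => A q.1 q.2) (u, z)).comp (ContinuousLinearMap.inl ℝ ℝ E)) u :=
    by have := hd.comp u (hasFDerivAt_prodMk_left (𝕜 := ℝ) u z); exact this
  have h2 : HasFDerivAt (fun w : E => A u w)
      ((fderiv ℝ (fun q : ℝ × E => A q.1 q.2) (u, z)).comp (ContinuousLinearMap.inr ℝ ℝ E)) z :=
    by have := hd.comp z (hasFDerivAt_prodMk_right (𝕜 := ℝ) u z); exact this
  rw [h1.fderiv, h2.fderiv]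
  simp only [ContinuousLinearMap.coe_comp', Function.comp_apply,
    ContinuousLinearMap.inl_apply, ContinuousLinearMap.inr_apply]
  rw [← map_add]
  congr 1
  simp [Prod.mk_add_mk]


set_option maxHeartbeats 1000000

/-- Lemma 3.1: monotonicity-type estimate (3.1) for a vector field `A(u,z)`
satisfying the differentiated structure conditions. -/
theorem vector_field_monotonicity {N : ℕ} (hN : 1 ≤ N) (p c₀ : ℝ)
    (hp : 2 ≤ p) (hc₀ : 0 < c₀) :
    ∃ cp > 0, ∃ Γp > 0, ∀ f₁ g₁ : ℝ, 0 ≤ f₁ → 0 ≤ g₁ →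
      ∀ A : ℝ → EuclideanSpace ℝ (Fin N) → EuclideanSpace ℝ (Fin N),
        ContDiff ℝ 1 (fun q : ℝ × EuclideanSpace ℝ (Fin N) => A q.1 q.2) →
        (∀ (u : ℝ) (z μ : EuclideanSpace ℝ (Fin N)),
          c₀ * ‖z‖ ^ (p-2) * ‖μ‖ ^ 2 ≤ ⟪fderiv ℝ (fun w => A u w) z μ, μ⟫) →
        (∀ (u : ℝ) (z : EuclideanSpace ℝ (Fin N)),
          ‖fderiv ℝ (fun v => A v z) u‖ ≤ g₁ * ‖z‖ ^ (p-2) + f₁) →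
        ∀ (μ μ' : ℝ) (η η' : EuclideanSpace ℝ (Fin N)),
          cp * (‖η‖ + ‖η'‖) ^ (p-2) * ‖η - η'‖ ^ 2
            - Γp * (f₁ ^ (p/(p-1)) * |μ - μ'| ^ (p/(p-1))
                + g₁ ^ 2 * ‖η'‖ ^ (p-2) * |μ - μ'| ^ 2
                + g₁ ^ 2 * ‖η - η'‖ ^ (p-2) * |μ - μ'| ^ 2)
          ≤ ⟪A μ η - A μ' η', η - η'⟫ := by
  have hp1 : (1:ℝ) < p := by linarith
  have hp2 : (0:ℝ) ≤ p - 2 := by linarith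
  have hp0 : p ≠ 0 := by intro h; rw [h] at hp; norm_num at hp
  have hpm1 : (0:ℝ) < p - 1 := by linarith
  set K : ℝ := (4:ℝ) ^ (p-2) with hKdef
  have hK0 : 0 < K := Real.rpow_pos_of_pos (by norm_num) _
  have hKne : K ≠ 0 := ne_of_gt hK0
  have hc₀ne : c₀ ≠ 0 := ne_of_gt hc₀
  set lam : ℝ := c₀ / (16 * K) with hlam
  have hlam0 : 0 < lam := by positivity
  set Γ₁ : ℝ := lam ^ (-(1/(p-1))) with hΓ₁
  have hΓ₁0 : 0 < Γ₁ := Real.rpow_pos_of_pos hlam0 _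
  refine ⟨c₀ / (8*K), by positivity, Γ₁ + 4*K^2/c₀, by positivity, ?_⟩
  intro f₁ g₁ hf₁ hg₁ A hA hmono hgrow μ μ' η η'
  rcases eq_or_ne η η' with he | he
  · have hz : η - η' = (0:EuclideanSpace ℝ (Fin N)) := by rw [he, sub_self]
    rw [hz]
    simp only [inner_zero_right, norm_zero]
    have h0 : (0:ℝ) ≤ (Γ₁ + 4*K^2/c₀) * (f₁ ^ (p/(p-1)) * |μ - μ'| ^ (p/(p-1))
        + g₁^2 * ‖η'‖^(p-2) * |μ - μ'|^2
        + g₁^2 * (0:ℝ)^(p-2) * |μ - μ'|^2) := by positivity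
    nlinarith [h0]
  · have hbne : η - η' ≠ 0 := sub_ne_zero.mpr he
    set q : ℝ := p/(p-1) with hq
    set a : ℝ := μ - μ' with ha
    set b : EuclideanSpace ℝ (Fin N) := η - η' with hb
    have hbpos : 0 < ‖b‖ := norm_pos_iff.mpr hbne
    set M : ℝ := ‖η‖ + ‖η'‖ with hM
    have hbM : ‖b‖ ≤ M := by rw [hb, hM]; exact norm_sub_le _ _
    have hM0 : 0 < M := lt_of_lt_of_le hbpos hbM
    set S : ℝ := M ^ (p-2) with hS
    have hS0 : 0 < S := Real.rpow_pos_of_pos hM0 _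
    have hwc : Continuous fun s : ℝ => ‖η' + s • b‖ ^ (p-2) := seg_cont p hp2 η' b
    set W : ℝ := ∫ s in (0:ℝ)..1, ‖η' + s • b‖ ^ (p-2) with hW
    -- pointwise upper bound on the weight
    have hwS : ∀ s ∈ Set.Icc (0:ℝ) 1, ‖η' + s • b‖ ^ (p-2) ≤ S := by
      intro s hs
      rw [hS]
      apply Real.rpow_le_rpow (norm_nonneg _) ?_ hp2
      have h1 : η' + s • b = s • η + (1 - s) • η' := by rw [hb]; module
      rw [h1]
      calc ‖s • η + (1-s) • η'‖ ≤ ‖s • η‖ + ‖(1-s) • η'‖ := norm_add_le _ _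
        _ = s * ‖η‖ + (1-s) * ‖η'‖ := by
            rw [norm_smul, norm_smul, Real.norm_eq_abs, Real.norm_eq_abs,
              abs_of_nonneg hs.1, abs_of_nonneg (by linarith [hs.2])]
        _ ≤ M := by
            rw [hM]
            nlinarith [hs.1, hs.2, norm_nonneg η, norm_nonneg η']
    -- integral lower bound
    have hWlb : S / (4 * K) ≤ W := by
      have h1 := seg_lb p hp2 η η'
      rw [← hb, ← hM, ← hW] at h1
      have h2 : ((M/4):ℝ) ^ (p-2) = S / K := by
        rw [hS, hKdef, ← Real.div_rpow (le_of_lt hM0) (by norm_num)]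
      calc S / (4*K) = (1/4) * ((M/4) ^ (p-2)) := by rw [h2]; ring
        _ ≤ W := h1
    -- derivative along the segment
    have hAd : Differentiable ℝ (fun q : ℝ × EuclideanSpace ℝ (Fin N) => A q.1 q.2) :=
      hA.differentiable one_ne_zero
    set F : ℝ → ℝ := fun s => ⟪A (μ' + s * a) (η' + s • b), b⟫ with hF
    set F' : ℝ → ℝ := fun s =>
      ⟪(fderiv ℝ (fun q : ℝ × EuclideanSpace ℝ (Fin N) => A q.1 q.2)
        (μ' + s * a, η' + s • b)) (a, b), b⟫ with hF'
    have hG : ∀ s : ℝ, HasDerivAt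
        (fun t : ℝ => ((μ' + t * a, η' + t • b) : ℝ × EuclideanSpace ℝ (Fin N))) (a, b) s := by
      intro s
      have h1 : HasDerivAt (fun t : ℝ => μ' + t * a) a s := by
        simpa using ((hasDerivAt_id s).mul_const a).const_add μ'
      have h2 : HasDerivAt (fun t : ℝ => η' + t • b) b s := by
        simpa using ((hasDerivAt_id s).smul_const b).const_add η'
      exact h1.prodMk h2
    have hFD : ∀ s : ℝ, HasDerivAt F (F' s) s := by
      intro s
      have h3 : HasDerivAt (fun t : ℝ => A (μ' + t * a) (η' + t • b))
          ((fderiv ℝ (fun q : ℝ × EuclideanSpace ℝ (Fin N) => A q.1 q.2)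
            (μ' + s * a, η' + s • b)) (a, b)) s :=
        by have := ((hAd (μ' + s*a, η' + s • b)).hasFDerivAt).comp_hasDerivAt s (hG s); exact this
      have h4 := HasDerivAt.inner ℝ h3 (hasDerivAt_const s b)
      simpa using h4
    have hF'c : Continuous F' := by
      have h1 : Continuous (fderiv ℝ (fun q : ℝ × EuclideanSpace ℝ (Fin N) => A q.1 q.2)) :=
        hA.continuous_fderiv one_ne_zero
      have h2 : Continuous (fun s : ℝ =>
          ((μ' + s * a, η' + s • b) : ℝ × EuclideanSpace ℝ (Fin N))) :=
        (continuous_const.add (continuous_id.mul continuous_const)).prodMk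
          (continuous_const.add (continuous_id.smul continuous_const))
      exact ((h1.comp h2).clm_apply continuous_const).inner continuous_const
    have hFTC : ∫ s in (0:ℝ)..1, F' s = ⟪A μ η - A μ' η', b⟫ := by
      rw [intervalIntegral.integral_eq_sub_of_hasDerivAt (fun s _ => hFD s)
        (hF'c.intervalIntegrable 0 1)]
      have e1 : μ' + 1 * a = μ := by rw [ha]; ring
      have e2 : η' + (1:ℝ) • b = η := by rw [hb]; module
      have e3 : μ' + 0 * a = μ' := by ring
      have e4 : η' + (0:ℝ) • b = η' := by module
      simp only [hF, e1, e2, e3, e4, inner_sub_left]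
    -- pointwise lower bound on F'
    set C1 : ℝ := (g₁ * S + f₁) * (|a| * ‖b‖) with hC1
    have hptw : ∀ s ∈ Set.Icc (0:ℝ) 1,
        c₀ * ‖η' + s • b‖ ^ (p-2) * ‖b‖^2 - C1 ≤ F' s := by
      intro s hs
      have hsplit := fderiv_split A hA (μ' + s * a) (η' + s • b) a b
      have hFs : F' s = ⟪fderiv ℝ (fun v => A v (η' + s • b)) (μ' + s * a) a, b⟫
          + ⟪fderiv ℝ (fun w => A (μ' + s * a) w) (η' + s • b) b, b⟫ := by
        simp only [hF']
        rw [hsplit, inner_add_left]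
      have h1 : c₀ * ‖η' + s • b‖ ^ (p-2) * ‖b‖^2
          ≤ ⟪fderiv ℝ (fun w => A (μ' + s * a) w) (η' + s • b) b, b⟫ :=
        hmono (μ' + s * a) (η' + s • b) b
      have h2 : |⟪fderiv ℝ (fun v => A v (η' + s • b)) (μ' + s * a) a, b⟫|
          ≤ (g₁ * ‖η' + s • b‖ ^ (p-2) + f₁) * (|a| * ‖b‖) := by
        calc |⟪fderiv ℝ (fun v => A v (η' + s • b)) (μ' + s * a) a, b⟫|
            ≤ ‖fderiv ℝ (fun v => A v (η' + s • b)) (μ' + s * a) a‖ * ‖b‖ :=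
              abs_real_inner_le_norm _ _
          _ ≤ (‖fderiv ℝ (fun v => A v (η' + s • b)) (μ' + s * a)‖ * |a|) * ‖b‖ := by
              have := (fderiv ℝ (fun v => A v (η' + s • b)) (μ' + s * a)).le_opNorm a
              rw [Real.norm_eq_abs] at this
              exact mul_le_mul_of_nonneg_right this (norm_nonneg b)
          _ ≤ (g₁ * ‖η' + s • b‖ ^ (p-2) + f₁) * (|a| * ‖b‖) := by
              have := hgrow (μ' + s * a) (η' + s • b)
              nlinarith [abs_nonneg a, norm_nonneg b,
                mul_nonneg (abs_nonneg a) (norm_nonneg b)]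
      have h3 : ‖η' + s • b‖ ^ (p-2) ≤ S := hwS s hs
      have h4 := neg_abs_le ⟪fderiv ℝ (fun v => A v (η' + s • b)) (μ' + s * a) a, b⟫
      rw [hFs, hC1]
      have h5 : (g₁ * ‖η' + s • b‖ ^ (p-2) + f₁) * (|a| * ‖b‖)
          ≤ (g₁ * S + f₁) * (|a| * ‖b‖) := by
        nlinarith [h3, mul_nonneg hg₁ (mul_nonneg (abs_nonneg a) (norm_nonneg b))]
      linarith [h1, h2, h4, h5]
    -- integrate the bound
    have hphic : Continuous fun s : ℝ => c₀ * ‖η' + s • b‖ ^ (p-2) * ‖b‖^2 - C1 :=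
      (((continuous_const.mul hwc).mul continuous_const).sub continuous_const)
    have hIle : (∫ s in (0:ℝ)..1, (c₀ * ‖η' + s • b‖ ^ (p-2) * ‖b‖^2 - C1))
        ≤ ∫ s in (0:ℝ)..1, F' s :=
      intervalIntegral.integral_mono_on (by norm_num)
        (hphic.intervalIntegrable 0 1) (hF'c.intervalIntegrable 0 1) hptw
    have hIval : (∫ s in (0:ℝ)..1, (c₀ * ‖η' + s • b‖ ^ (p-2) * ‖b‖^2 - C1))
        = c₀ * ‖b‖^2 * W - C1 := by
      rw [intervalIntegral.integral_sub
        ((show Continuous fun s : ℝ => c₀ * ‖η' + s • b‖ ^ (p-2) * ‖b‖^2 from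
          (continuous_const.mul hwc).mul continuous_const).intervalIntegrable 0 1)
        ((continuous_const : Continuous fun _ : ℝ => C1).intervalIntegrable 0 1)]
      rw [intervalIntegral.integral_const, smul_eq_mul]
      have h5 : (∫ s in (0:ℝ)..1, c₀ * ‖η' + s • b‖ ^ (p-2) * ‖b‖^2)
          = c₀ * ‖b‖^2 * W := by
        have h6 : (fun s : ℝ => c₀ * ‖η' + s • b‖ ^ (p-2) * ‖b‖^2)
            = fun s : ℝ => (c₀ * ‖b‖^2) * ‖η' + s • b‖ ^ (p-2) := by
          funext s; ring
        rw [h6, intervalIntegral.integral_const_mul, ← hW]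
      rw [h5]
      ring
    have hmain : c₀ * ‖b‖^2 * W - C1 ≤ ⟪A μ η - A μ' η', b⟫ := by
      rw [← hFTC, ← hIval]
      exact hIle
    -- elementary rpow comparisons
    have h2r : ∀ x y : ℝ, 0 ≤ x → 0 ≤ y →
        (x + y) ^ (p-2) ≤ (2:ℝ)^(p-2) * (x^(p-2) + y^(p-2)) := by
      intro x y hx hy
      have h20 : (0:ℝ) < (2:ℝ)^(p-2) := Real.rpow_pos_of_pos (by norm_num) _
      rcases le_total x y with h | h
      · calc (x+y)^(p-2) ≤ (2*y)^(p-2) := Real.rpow_le_rpow (by linarith) (by linarith) hp2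
          _ = 2^(p-2) * y^(p-2) := Real.mul_rpow (by norm_num) hy
          _ ≤ 2^(p-2) * (x^(p-2) + y^(p-2)) := by
              nlinarith [Real.rpow_nonneg hx (p-2)]
      · calc (x+y)^(p-2) ≤ (2*x)^(p-2) := Real.rpow_le_rpow (by linarith) (by linarith) hp2
          _ = 2^(p-2) * x^(p-2) := Real.mul_rpow (by norm_num) hx
          _ ≤ 2^(p-2) * (x^(p-2) + y^(p-2)) := by
              nlinarith [Real.rpow_nonneg hy (p-2)]
    have hbS : ‖b‖^(p-2) ≤ S := by
      rw [hS]; exact Real.rpow_le_rpow (norm_nonneg _) hbM hp2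
    have hSbound : S ≤ K * (‖η'‖^(p-2) + ‖b‖^(p-2)) := by
      have hMle : M ≤ 2 * (‖η'‖ + ‖b‖) := by
        have hη : ‖η‖ ≤ ‖η'‖ + ‖b‖ := by
          have : η = η' + b := by rw [hb]; module
          rw [this]
          exact norm_add_le _ _
        rw [hM]; linarith [norm_nonneg η']
      have h20 : (0:ℝ) < (2:ℝ)^(p-2) := Real.rpow_pos_of_pos (by norm_num) _
      calc S = M^(p-2) := hS
        _ ≤ (2*(‖η'‖+‖b‖))^(p-2) := Real.rpow_le_rpow (le_of_lt hM0) hMle hp2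
        _ = 2^(p-2) * (‖η'‖+‖b‖)^(p-2) := Real.mul_rpow (by norm_num) (by positivity)
        _ ≤ 2^(p-2) * (2^(p-2) * (‖η'‖^(p-2) + ‖b‖^(p-2))) := by
            have := h2r ‖η'‖ ‖b‖ (norm_nonneg _) (norm_nonneg _)
            nlinarith [this]
        _ = (2^(p-2) * 2^(p-2)) * (‖η'‖^(p-2) + ‖b‖^(p-2)) := by ring
        _ = K * (‖η'‖^(p-2) + ‖b‖^(p-2)) := by
            rw [hKdef, ← Real.mul_rpow (by norm_num : (0:ℝ) ≤ 2) (by norm_num : (0:ℝ) ≤ 2)]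
            norm_num
    -- Young inequality for the g₁-term
    have hY1 : g₁ * S * (|a| * ‖b‖)
        ≤ lam * (S * ‖b‖^2) + (4*K/c₀) * (g₁^2 * (S * |a|^2)) := by
      have hscgen : ∀ x y : ℝ, g₁ * (x * y) ≤ lam * y^2 + (4*K/c₀) * (g₁^2 * x^2) := by
        intro x y
        rw [← sub_nonneg]
        have hid : lam * y^2 + (4*K/c₀) * (g₁^2 * x^2) - g₁ * (x * y)
            = (c₀*y - 8*K*(g₁*x))^2 / (16*K*c₀) := by
          rw [hlam]
          field_simp
          ring
        rw [hid]
        positivity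
      have hsc := hscgen |a| ‖b‖
      calc g₁ * S * (|a| * ‖b‖) = S * (g₁ * (|a| * ‖b‖)) := by ring
        _ ≤ S * (lam * ‖b‖^2 + (4*K/c₀) * (g₁^2 * |a|^2)) :=
            mul_le_mul_of_nonneg_left hsc hS0.le
        _ = lam * (S * ‖b‖^2) + (4*K/c₀) * (g₁^2 * (S * |a|^2)) := by ring
    -- Young inequality for the f₁-term
    have hpq : Real.HolderConjugate p q := by
      rw [hq]; exact Real.HolderConjugate.conjExponent hp1
    set t : ℝ := lam ^ (1/p) with ht
    have ht0 : 0 < t := Real.rpow_pos_of_pos hlam0 _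
    have hYsc := Real.young_inequality (t*‖b‖) (f₁*|a|/t) hpq
    have e5 : |t*‖b‖| = t*‖b‖ := abs_of_nonneg (by positivity)
    have e6 : |f₁*|a|/t| = f₁*|a|/t := abs_of_nonneg (by positivity)
    rw [e5, e6] at hYsc
    have hLHS : t*‖b‖ * (f₁*|a|/t) = f₁*(|a| * ‖b‖) := by
      field_simp
    rw [hLHS] at hYsc
    have htp : t^p = lam := by
      rw [ht, ← Real.rpow_mul hlam0.le, one_div_mul_cancel hp0, Real.rpow_one]
    have hbp : ‖b‖^p ≤ S * ‖b‖^2 := by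
      have hsplit2 : ‖b‖^p = ‖b‖^(p-2) * ‖b‖^2 := by
        conv_lhs => rw [show p = (p-2) + 2 by ring]
        rw [Real.rpow_add hbpos, Real.rpow_two]
      rw [hsplit2]
      exact mul_le_mul_of_nonneg_right hbS (by positivity)
    have hterm1 : (t*‖b‖)^p / p ≤ lam * (S * ‖b‖^2) := by
      have hh1 : (t*‖b‖)^p = lam * ‖b‖^p := by
        rw [Real.mul_rpow ht0.le (norm_nonneg b), htp]
      calc (t*‖b‖)^p / p ≤ (t*‖b‖)^p := div_le_self (by positivity) (by linarith)
        _ = lam * ‖b‖^p := hh1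
        _ ≤ lam * (S * ‖b‖^2) := mul_le_mul_of_nonneg_left hbp hlam0.le
    have hq1 : 1 ≤ q := by
      rw [hq, le_div_iff₀ hpm1]; linarith
    have hterm2 : (f₁*|a|/t)^q / q ≤ Γ₁ * (f₁^q * |a|^q) := by
      have hh1 : (f₁*|a|/t)^q = f₁^q * |a|^q / t^q := by
        rw [Real.div_rpow (by positivity) ht0.le, Real.mul_rpow hf₁ (abs_nonneg a)]
      have hh2 : t^q = lam^(1/(p-1)) := by
        rw [ht, ← Real.rpow_mul hlam0.le]
        congr 1
        rw [hq]
        field_simp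
      have hh3 : Γ₁ = 1 / lam^(1/(p-1)) := by
        rw [hΓ₁, Real.rpow_neg hlam0.le]
        exact (one_div _).symm
      have hh4 : (0:ℝ) < lam^(1/(p-1)) := Real.rpow_pos_of_pos hlam0 _
      rw [hh1, hh2, hh3]
      calc f₁^q * |a|^q / lam^(1/(p-1)) / q ≤ f₁^q * |a|^q / lam^(1/(p-1)) :=
            div_le_self (by positivity) hq1
        _ = 1/lam^(1/(p-1)) * (f₁^q * |a|^q) := by ring
    have hY2 : f₁ * (|a| * ‖b‖) ≤ lam * (S*‖b‖^2) + Γ₁ * (f₁^q * |a|^q) :=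
      le_trans hYsc (add_le_add hterm1 hterm2)
    -- final assembly
    clear hFD hF'c hFTC hIle hIval hptw hphic hwS hwc hG hYsc hLHS e5 e6 hterm1 hterm2 hbp htp
    clear_value K lam Γ₁ q a b M S W F F' C1 t
    clear hF hF' ht ht0
    clear F F' t
    have hX : (0:ℝ) ≤ f₁^q * |a|^q := by positivity
    have hYn : (0:ℝ) ≤ g₁^2 * ‖η'‖^(p-2) * |a|^2 := by positivity
    have hZn : (0:ℝ) ≤ g₁^2 * ‖b‖^(p-2) * |a|^2 := by positivity
    have hsa : (4*K/c₀) * (g₁^2 * (S * |a|^2))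
        ≤ (4*K^2/c₀) * (g₁^2 * ‖η'‖^(p-2) * |a|^2 + g₁^2 * ‖b‖^(p-2) * |a|^2) := by
      have hh1 : S * |a|^2 ≤ (K * (‖η'‖^(p-2) + ‖b‖^(p-2))) * |a|^2 :=
        mul_le_mul_of_nonneg_right hSbound (sq_nonneg _)
      have hh2 : (0:ℝ) ≤ 4*K/c₀ * g₁^2 := by positivity
      calc (4*K/c₀) * (g₁^2 * (S * |a|^2))
          = (4*K/c₀ * g₁^2) * (S * |a|^2) := by ring
        _ ≤ (4*K/c₀ * g₁^2) * ((K * (‖η'‖^(p-2) + ‖b‖^(p-2))) * |a|^2) :=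
            mul_le_mul_of_nonneg_left hh1 hh2
        _ = (4*K^2/c₀) * (g₁^2 * ‖η'‖^(p-2) * |a|^2 + g₁^2 * ‖b‖^(p-2) * |a|^2) := by ring
    have hΓsplit : Γ₁ * (f₁^q * |a|^q)
          + (4*K^2/c₀) * (g₁^2 * ‖η'‖^(p-2) * |a|^2 + g₁^2 * ‖b‖^(p-2) * |a|^2)
        ≤ (Γ₁ + 4*K^2/c₀) * (f₁^q * |a|^q + g₁^2 * ‖η'‖^(p-2) * |a|^2
          + g₁^2 * ‖b‖^(p-2) * |a|^2) := by
      have hh1 : (0:ℝ) ≤ Γ₁ * (g₁^2 * ‖η'‖^(p-2) * |a|^2 + g₁^2 * ‖b‖^(p-2) * |a|^2) :=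
        mul_nonneg hΓ₁0.le (add_nonneg hYn hZn)
      have hh2 : (0:ℝ) ≤ (4*K^2/c₀) * (f₁^q * |a|^q) :=
        mul_nonneg (by positivity) hX
      linarith [hh1, hh2]
    have hgood : c₀ * ‖b‖^2 * (S/(4*K)) ≤ c₀ * ‖b‖^2 * W :=
      mul_le_mul_of_nonneg_left hWlb (by positivity)
    have e1 : c₀ * ‖b‖^2 * (S/(4*K)) - 2*(lam*(S*‖b‖^2)) = c₀/(8*K) * S * ‖b‖^2 := by
      rw [hlam]
      ring
    have hC1le : C1 ≤ 2*(lam*(S*‖b‖^2)) + Γ₁*(f₁^q * |a|^q) + (4*K/c₀)*(g₁^2*(S*|a|^2)) := by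
      rw [hC1]
      linarith [hY1, hY2]
    linarith [hgood, hC1le, hsa, hΓsplit, e1, hmain]
end

section
/- Let p ≥ 2, let f, g ≥ 0 and u ∈ ℝ be real numbers, let η, η̃ ∈ ℝ^N, and let b ∈ ℝ satisfy |b| ≤ g|η|^{p−1} + f(1 + |u|^{p−1}). Set K := f(1 + |u|^{p−1}) + g(2|η̃|)^{p−1} and let b̄ := max(−K, min(b, K)) be the truncation of b at level K. Then |b − b̄| ≤ 2^{p−1} g |η − η̃|^{p−1}. -/
/-- Truncation estimate from the proof of Proposition 3.2: if
`|b| ≤ g|η|^{p-1} + f(1+|u|^{p-1})` and `b̄` is the truncation of `b` at level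
`K = f(1+|u|^{p-1}) + g(2|η̃|)^{p-1}`, then `|b - b̄| ≤ 2^{p-1} g |η - η̃|^{p-1}`. -/
theorem truncation_estimate {N : ℕ} (p f g u b : ℝ)
    (η η' : EuclideanSpace ℝ (Fin N)) (hp : 2 ≤ p) (hf : 0 ≤ f) (hg : 0 ≤ g)
    (hb : |b| ≤ g * ‖η‖ ^ (p-1) + f * (1 + |u| ^ (p-1))) :
    |b - max (-(f * (1 + |u| ^ (p-1)) + g * (2 * ‖η'‖) ^ (p-1)))
        (min b (f * (1 + |u| ^ (p-1)) + g * (2 * ‖η'‖) ^ (p-1)))|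
      ≤ 2 ^ (p-1) * g * ‖η - η'‖ ^ (p-1) := by
  set K := f * (1 + |u| ^ (p-1)) + g * (2 * ‖η'‖) ^ (p-1) with hKdef
  have hp1 : (0:ℝ) < p - 1 := by linarith
  have hu : (0:ℝ) ≤ |u| ^ (p-1) := Real.rpow_nonneg (abs_nonneg u) _
  have hη'pow : (0:ℝ) ≤ (2 * ‖η'‖) ^ (p-1) :=
    Real.rpow_nonneg (by positivity) _
  have hK0 : 0 ≤ K := by
    have : (0:ℝ) ≤ f * (1 + |u| ^ (p-1)) := by nlinarith
    nlinarith
  have hRHS0 : 0 ≤ 2 ^ (p-1) * g * ‖η - η'‖ ^ (p-1) := by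
    have h2 : (0:ℝ) ≤ (2:ℝ) ^ (p-1) := Real.rpow_nonneg (by norm_num) _
    have h3 : (0:ℝ) ≤ ‖η - η'‖ ^ (p-1) := Real.rpow_nonneg (norm_nonneg _) _
    positivity
  by_cases hbK : |b| ≤ K
  · rw [min_eq_left (abs_le.mp hbK).2, max_eq_right (abs_le.mp hbK).1]
    simpa using hRHS0
  · push_neg at hbK
    have hgn : g * (2*‖η'‖)^(p-1) < g * ‖η‖^(p-1) := by
      have : K < g * ‖η‖ ^ (p-1) + f * (1 + |u| ^ (p-1)) := lt_of_lt_of_le hbK hb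
      rw [hKdef] at this; linarith
    have hg' : 0 < g := by
      rcases hg.lt_or_eq with h | h
      · exact h
      · exfalso; rw [← h] at hgn; simp at hgn
    have hηlt : 2*‖η'‖ < ‖η‖ := by
      by_contra h
      push_neg at h
      have := Real.rpow_le_rpow (by positivity) h (le_of_lt hp1)
      nlinarith
    have hnorm : ‖η‖ ≤ 2 * ‖η - η'‖ := by
      have h1 : ‖η‖ - ‖η'‖ ≤ ‖η - η'‖ := norm_sub_norm_le η η'
      linarith
    have hbound : g * ‖η‖^(p-1) ≤ 2 ^ (p-1) * g * ‖η - η'‖ ^ (p-1) := by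
      have h1 : ‖η‖^(p-1) ≤ (2 * ‖η - η'‖)^(p-1) :=
        Real.rpow_le_rpow (norm_nonneg _) hnorm (le_of_lt hp1)
      have h2 : (2 * ‖η - η'‖)^(p-1) = 2^(p-1) * ‖η - η'‖^(p-1) :=
        Real.mul_rpow (by norm_num) (norm_nonneg _)
      calc g * ‖η‖^(p-1) ≤ g * (2^(p-1) * ‖η - η'‖^(p-1)) := by
            rw [← h2]; exact mul_le_mul_of_nonneg_left h1 hg
        _ = 2 ^ (p-1) * g * ‖η - η'‖ ^ (p-1) := by ring
    have habsK : |b| - K ≤ g * ‖η‖^(p-1) - g * (2*‖η'‖)^(p-1) := by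
      rw [hKdef] at *; linarith
    rcases le_or_gt b 0 with hbneg | hbpos
    · have hblt : b < -K := by
        have : |b| = -b := abs_of_nonpos hbneg
        linarith [hbK, this.symm.le]
      rw [min_eq_left (by linarith : b ≤ K), max_eq_left (le_of_lt hblt)]
      have : |b - -K| = |b| - K := by
        rw [abs_of_nonpos hbneg] at *
        rw [abs_of_nonpos (by linarith : b - -K ≤ 0)]; ring
      rw [this]
      calc |b| - K ≤ g * ‖η‖^(p-1) - g * (2*‖η'‖)^(p-1) := habsK
        _ ≤ g * ‖η‖^(p-1) := by nlinarith
        _ ≤ _ := hbound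
    · have hbgt : K < b := by
        have : |b| = b := abs_of_pos hbpos
        linarith [hbK]
      rw [min_eq_right (le_of_lt hbgt), max_eq_right (by linarith : -K ≤ K)]
      have : |b - K| = |b| - K := by
        rw [abs_of_pos hbpos, abs_of_nonneg (by linarith : 0 ≤ b - K)]
      rw [this]
      calc |b| - K ≤ g * ‖η‖^(p-1) - g * (2*‖η'‖)^(p-1) := habsK
        _ ≤ g * ‖η‖^(p-1) := by nlinarith
        _ ≤ _ := hbound
end

section
/- Let (X, μ) be a measure space, let N ≥ 1 and α > 0, and let ξ_n : X → ℝ^N be a sequence of measurable functions. Suppose that for every positive integer m, the sequence of functions x ↦ ξ_n(x) · ( |ξ_n(x)| − 1/m )₊^α converges in ℝ^N for μ-almost every x ∈ X as n → ∞. Then there exists a measurable function ξ : X → ℝ^N such that ξ_n(x) → ξ(x) for μ-almost every x ∈ X as n → ∞. -/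
open MeasureTheory Filter
open scoped Topology

private lemma h_mono {c α : ℝ} (hα : 0 < α) :
    ∀ ⦃r s : ℝ⦄, 0 ≤ r → r ≤ s → (max (r - c) 0) ^ α * r ≤ (max (s - c) 0) ^ α * s := by
  intro r s hr hrs
  have h1 : max (r - c) 0 ≤ max (s - c) 0 := max_le_max (by linarith) le_rfl
  have h2 : (max (r - c) 0) ^ α ≤ (max (s - c) 0) ^ α :=
    Real.rpow_le_rpow (le_max_right _ _) h1 hα.le
  exact mul_le_mul h2 hrs hr (Real.rpow_nonneg (le_max_right _ _) _)

private lemma key_pointwise {N : ℕ} {α : ℝ} (hα : 0 < α)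
    (v : ℕ → EuclideanSpace ℝ (Fin N))
    (h : ∀ m : ℕ, ∃ L, Tendsto (fun n => (max (‖v n‖ - 1/((m:ℝ)+1)) 0) ^ α • v n)
      atTop (𝓝 L)) :
    ∃ L, Tendsto v atTop (𝓝 L) := by
  choose L hL using h
  by_cases hz : ∀ m, L m = 0
  · -- all limits zero: v → 0
    refine ⟨0, ?_⟩
    rw [NormedAddCommGroup.tendsto_nhds_zero]
    intro ε hε
    obtain ⟨m, hm⟩ := exists_nat_one_div_lt (show (0:ℝ) < ε/2 by linarith)
    have h0 : Tendsto (fun n => ‖(max (‖v n‖ - 1/((m:ℝ)+1)) 0) ^ α • v n‖) atTop (𝓝 0) := by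
      have := (hL m).norm
      rwa [hz m, norm_zero] at this
    have hpos : (0:ℝ) < (ε/2) ^ α * ε := by
      have := Real.rpow_pos_of_pos (show (0:ℝ) < ε/2 by linarith) α
      positivity
    filter_upwards [h0.eventually (eventually_lt_nhds hpos)] with n hn
    by_contra hcon
    push_neg at hcon
    have hle : (ε/2) ^ α * ε ≤ (max (‖v n‖ - 1/((m:ℝ)+1)) 0) ^ α * ‖v n‖ := by
      have h1 : ε/2 ≤ max (‖v n‖ - 1/((m:ℝ)+1)) 0 :=
        le_max_of_le_left (by linarith)
      exact mul_le_mul (Real.rpow_le_rpow (by linarith) h1 hα.le) hcon (by linarith)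
        (Real.rpow_nonneg (le_max_right _ _) _)
    rw [norm_smul, Real.norm_eq_abs,
      abs_of_nonneg (Real.rpow_nonneg (le_max_right _ _) _)] at hn
    linarith
  · push_neg at hz
    obtain ⟨m, hm⟩ := hz
    set c : ℝ := 1/((m:ℝ)+1) with hc
    have hc0 : 0 < c := by positivity
    set f : ℕ → EuclideanSpace ℝ (Fin N) := fun n => (max (‖v n‖ - c) 0) ^ α • v n with hf
    have hnorm : ∀ n, ‖f n‖ = (max (‖v n‖ - c) 0) ^ α * ‖v n‖ := by
      intro n
      rw [hf]
      rw [norm_smul, Real.norm_eq_abs, abs_of_nonneg (Real.rpow_nonneg (le_max_right _ _) _)]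
    have hfL : Tendsto (fun n => ‖f n‖) atTop (𝓝 ‖L m‖) := (hL m).norm
    have hLpos : 0 < ‖L m‖ := norm_pos_iff.2 hm
    set H : ℝ → ℝ := fun r => (max (r - c) 0) ^ α * r with hH
    have Hcont : Continuous H := by
      apply Continuous.mul _ continuous_id
      exact (Continuous.max (continuous_id.sub continuous_const) continuous_const).rpow_const
        (fun x => Or.inr hα.le)
    have Hc : H c = 0 := by simp [hH, Real.zero_rpow hα.ne']
    set b : ℝ := c + 1 + ‖L m‖ with hb
    have Hb : ‖L m‖ ≤ H b := by
      have h1 : max (b - c) 0 = 1 + ‖L m‖ := by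
        rw [max_eq_left (by rw [hb]; have := hLpos.le; linarith)]; ring
      have h2 : (1:ℝ) ≤ (1 + ‖L m‖) ^ α :=
        Real.one_le_rpow (by linarith) hα.le
      calc ‖L m‖ = 1 * ‖L m‖ := (one_mul _).symm
        _ ≤ (1 + ‖L m‖) ^ α * b := by
            apply mul_le_mul h2 (by rw [hb]; linarith) hLpos.le (Real.rpow_nonneg (by positivity) _)
        _ = H b := by rw [hH]; simp only []; rw [h1]
    obtain ⟨r, hrmem, hrH⟩ := intermediate_value_Icc
      (show c ≤ b by rw [hb]; have := hLpos.le; linarith) Hcont.continuousOn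
      (Set.mem_Icc.2 ⟨by rw [Hc]; exact hLpos.le, Hb⟩)
    have hrc : c < r := by
      rcases lt_or_eq_of_le hrmem.1 with h' | h'
      · exact h'
      · exfalso; rw [← h', Hc] at hrH; exact hLpos.ne' hrH.symm
    have Hstrict : ∀ ⦃s t : ℝ⦄, c ≤ s → s < t → H s < H t := by
      intro s t hs hst
      have hs0 : 0 ≤ s := hc0.le.trans hs
      have h2 : (max (s - c) 0) ^ α ≤ (t - c) ^ α := by
        have : max (s - c) 0 ≤ t - c := max_le (by linarith) (by linarith)
        exact Real.rpow_le_rpow (le_max_right _ _) this hα.le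
      have h3 : (0:ℝ) < (t - c) ^ α := Real.rpow_pos_of_pos (by linarith) _
      calc H s = (max (s - c) 0) ^ α * s := rfl
        _ ≤ (t - c) ^ α * s := mul_le_mul_of_nonneg_right h2 hs0
        _ < (t - c) ^ α * t := mul_lt_mul_of_pos_left (by linarith) h3
        _ = H t := by
            rw [hH]; simp only []
            rw [max_eq_left (by linarith : (0:ℝ) ≤ t - c)]
    have hHn : ∀ n, H (‖v n‖) = ‖f n‖ := fun n => (hnorm n).symm
    have hvr : Tendsto (fun n => ‖v n‖) atTop (𝓝 r) := by
      rw [Metric.tendsto_atTop]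
      intro ε hε
      set ε' : ℝ := min ε ((r - c) / 2) with hε'
      have hε'1 : ε' ≤ (r - c)/2 := min_le_right _ _
      have hε'2 : ε' ≤ ε := min_le_left _ _
      have hε'0 : 0 < ε' := lt_min hε (by linarith)
      have h1 : H (r - ε') < ‖L m‖ := by
        rw [← hrH]; exact Hstrict (by linarith) (by linarith)
      have h2 : ‖L m‖ < H (r + ε') := by
        rw [← hrH]; exact Hstrict hrc.le (by linarith)
      have hev := (hfL.eventually (eventually_lt_nhds h2)).and
        (hfL.eventually (eventually_gt_nhds h1))
      rw [eventually_atTop] at hev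
      obtain ⟨Nn, hNn⟩ := hev
      refine ⟨Nn, fun n hn => ?_⟩
      obtain ⟨ha, hb'⟩ := hNn n hn
      rw [← hHn n] at ha hb'
      have hlo : r - ε' < ‖v n‖ := by
        by_contra hcon
        push_neg at hcon
        exact absurd (h_mono hα (norm_nonneg _) hcon) (not_le.2 hb')
      have hhi : ‖v n‖ < r + ε' := by
        by_contra hcon
        push_neg at hcon
        exact absurd (h_mono hα (by linarith) hcon) (not_le.2 ha)
      rw [Real.dist_eq, abs_lt]
      constructor <;> linarith
    -- conclude
    set φ : ℕ → ℝ := fun n => (max (‖v n‖ - c) 0) ^ α with hφ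
    have hφlim : Tendsto φ atTop (𝓝 ((r - c) ^ α)) := by
      have hcont : Continuous (fun t : ℝ => (max (t - c) 0) ^ α) :=
        (Continuous.max (continuous_id.sub continuous_const) continuous_const).rpow_const
          (fun x => Or.inr hα.le)
      have := (hcont.tendsto r).comp hvr
      rwa [max_eq_left (by linarith : (0:ℝ) ≤ r - c)] at this
    have hrcα : (0:ℝ) < (r - c) ^ α := Real.rpow_pos_of_pos (by linarith) _
    have hinv : Tendsto (fun n => (φ n)⁻¹) atTop (𝓝 ((r - c) ^ α)⁻¹) :=
      hφlim.inv₀ hrcα.ne'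
    refine ⟨((r - c) ^ α)⁻¹ • L m, ?_⟩
    have hmain : Tendsto (fun n => (φ n)⁻¹ • f n) atTop (𝓝 (((r - c) ^ α)⁻¹ • L m)) :=
      hinv.smul (hL m)
    have hev : ∀ᶠ n in atTop, (φ n)⁻¹ • f n = v n := by
      filter_upwards [hvr.eventually (eventually_gt_nhds hrc)] with n hn
      have hφpos : 0 < φ n := by
        rw [hφ]
        exact Real.rpow_pos_of_pos (lt_max_of_lt_left (by linarith)) _
      rw [hf]
      simp only []
      rw [smul_smul, inv_mul_cancel₀ hφpos.ne', one_smul]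
    exact hmain.congr' hev

/-- Lemma 2.12: if `ξ_n (|ξ_n| - 1/m)₊^α` converges a.e. for every `m ∈ ℕ`,
then `ξ_n` converges a.e. -/
theorem ae_convergence_of_truncated_convergence
    {X : Type*} [MeasurableSpace X] (μ : Measure X) {N : ℕ} (hN : 1 ≤ N)
    (α : ℝ) (hα : 0 < α)
    (ξ : ℕ → X → EuclideanSpace ℝ (Fin N)) (hmeas : ∀ n, Measurable (ξ n))
    (hconv : ∀ m : ℕ, 0 < m → ∀ᵐ x ∂μ, ∃ L : EuclideanSpace ℝ (Fin N),
      Tendsto (fun n => (max (‖ξ n x‖ - 1/(m:ℝ)) 0) ^ α • ξ n x) atTop (nhds L)) :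
    ∃ ξ' : X → EuclideanSpace ℝ (Fin N), Measurable ξ' ∧
      ∀ᵐ x ∂μ, Tendsto (fun n => ξ n x) atTop (nhds (ξ' x)) := by
  have hall : ∀ᵐ x ∂μ, ∀ m : ℕ, ∃ L : EuclideanSpace ℝ (Fin N),
      Tendsto (fun n => (max (‖ξ n x‖ - 1/((m:ℝ)+1)) 0) ^ α • ξ n x) atTop (𝓝 L) := by
    rw [ae_all_iff]
    intro m
    have := hconv (m + 1) (Nat.succ_pos m)
    filter_upwards [this] with x hx
    obtain ⟨L, hL⟩ := hx
    refine ⟨L, ?_⟩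
    convert hL using 3
    push_cast
    ring
  have hptwise : ∀ᵐ x ∂μ, ∃ L : EuclideanSpace ℝ (Fin N),
      Tendsto (fun n => ξ n x) atTop (𝓝 L) := by
    filter_upwards [hall] with x hx
    exact key_pointwise hα (fun n => ξ n x) hx
  exact measurable_limit_of_tendsto_metrizable_ae (fun n => (hmeas n).aemeasurable) hptwise
end

section
/- Let N ≥ 3 and 2 ≤ p < N. Then there exist a nonnegative, compactly supported, Lebesgue-integrable function f : ℝ^N → ℝ and constants 0 < a ≤ A < ∞ such that sup_{x ∈ ℝ^N} W_p^f(x, ∞) ≤ A, while sup_{x ∈ ℝ^N} W_p^f(x, R) ≥ a for every R > 0; in particular lim_{R → 0} sup_{x ∈ ℝ^N} W_p^f(x, R) > 0 although sup_{x ∈ ℝ^N} W_p^f(x, ∞) < ∞. -/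
open MeasureTheory Metric Set Filter
open scoped Topology ENNReal

/-- The Wolff potential `W_{β,p}^f(x,∞)`. -/
noncomputable def wolffTop (N : ℕ) (β p : ℝ) (f : EuclideanSpace ℝ (Fin N) → ℝ)
    (x : EuclideanSpace ℝ (Fin N)) : ℝ :=
  ∫ r in Set.Ioi (0:ℝ),
    (1/r) * ((r ^ (β*p - (N:ℝ)) * ∫ y in Metric.ball x r, f y) ^ (1/(p-1)))

namespace KatoAux

noncomputable section

/-- unit vector -/
def eVec (N : ℕ) (h : 0 < N) : EuclideanSpace ℝ (Fin N) :=
  EuclideanSpace.single ⟨0, h⟩ (1:ℝ)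

lemma norm_eVec (N : ℕ) (h : 0 < N) : ‖eVec N h‖ = 1 := by
  simp [eVec, EuclideanSpace.norm_single]

/-- centers of the bumps -/
def ctr (N : ℕ) (h : 0 < N) (k : ℕ) : EuclideanSpace ℝ (Fin N) :=
  ((1/2:ℝ)^k) • eVec N h

/-- radii of the bumps -/
def rad (k : ℕ) : ℝ := (1/4:ℝ)^(k+2)

lemma rad_pos (k : ℕ) : 0 < rad k := by unfold rad; positivity

lemma rad_le' (k : ℕ) : rad k ≤ (1/2:ℝ)^k / 16 := by
  have h : rad k = (1/4:ℝ)^k/16 := by rw [rad, pow_add]; ring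
  rw [h]
  have := pow_le_pow_left₀ (by norm_num : (0:ℝ) ≤ 1/4) (by norm_num : (1/4:ℝ) ≤ 1/2) k
  linarith

lemma dist_ctr (N : ℕ) (h : 0 < N) (j k : ℕ) :
    dist (ctr N h j) (ctr N h k) = |(1/2:ℝ)^j - (1/2:ℝ)^k| := by
  rw [dist_eq_norm, ctr, ctr, ← sub_smul, norm_smul, norm_eVec, mul_one, Real.norm_eq_abs]

lemma dist_ctr_ge (N : ℕ) (h : 0 < N) {j k : ℕ} (hjk : j ≠ k) :
    (1/2:ℝ)^(min j k + 1) ≤ dist (ctr N h j) (ctr N h k) := by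
  rcases hjk.lt_or_gt with hlt | hlt
  · rw [dist_ctr, abs_of_nonneg (by
      have := pow_le_pow_of_le_one (by norm_num : (0:ℝ) ≤ 1/2) (by norm_num) hlt.le
      linarith)]
    have hk : (1/2:ℝ)^k ≤ (1/2:ℝ)^(j+1) :=
      pow_le_pow_of_le_one (by norm_num) (by norm_num) hlt
    have : (1/2:ℝ)^(j+1) + (1/2:ℝ)^(j+1) = (1/2:ℝ)^j := by ring
    rw [min_eq_left hlt.le]
    linarith
  · rw [dist_comm] at *
    rw [dist_ctr, abs_of_nonneg (by
      have := pow_le_pow_of_le_one (by norm_num : (0:ℝ) ≤ 1/2) (by norm_num) hlt.le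
      linarith)]
    have hk : (1/2:ℝ)^j ≤ (1/2:ℝ)^(k+1) :=
      pow_le_pow_of_le_one (by norm_num) (by norm_num) hlt
    have : (1/2:ℝ)^(k+1) + (1/2:ℝ)^(k+1) = (1/2:ℝ)^k := by ring
    rw [min_eq_right hlt.le]
    linarith

lemma balls_disjoint (N : ℕ) (h : 0 < N) {j k : ℕ} (hjk : j ≠ k) :
    Disjoint (ball (ctr N h j) (rad j)) (ball (ctr N h k) (rad k)) := by
  apply ball_disjoint_ball
  have h1 : rad j ≤ (1/2:ℝ)^(min j k)/16 := by
    calc rad j ≤ (1/2:ℝ)^j/16 := rad_le' j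
    _ ≤ (1/2:ℝ)^(min j k)/16 := by
        have := pow_le_pow_of_le_one (by norm_num : (0:ℝ) ≤ 1/2) (by norm_num)
          (min_le_left j k)
        linarith
  have h2 : rad k ≤ (1/2:ℝ)^(min j k)/16 := by
    calc rad k ≤ (1/2:ℝ)^k/16 := rad_le' k
    _ ≤ (1/2:ℝ)^(min j k)/16 := by
        have := pow_le_pow_of_le_one (by norm_num : (0:ℝ) ≤ 1/2) (by norm_num)
          (min_le_right j k)
        linarith
  have h3 := dist_ctr_ge N h hjk
  have h4 : (1/2:ℝ)^(min j k + 1) = (1/2:ℝ)^(min j k)/2 := by ring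
  have h5 : (0:ℝ) < (1/2:ℝ)^(min j k) := by positivity
  linarith

/-- weights -/
def lam (p : ℝ) (k : ℕ) : ℝ := rad k ^ (-p)

lemma lam_pos (p : ℝ) (k : ℕ) : 0 < lam p k := Real.rpow_pos_of_pos (rad_pos k) _

/-- the ENNReal-valued density -/
def FF (N : ℕ) (h : 0 < N) (p : ℝ) : EuclideanSpace ℝ (Fin N) → ℝ≥0∞ := fun y =>
  ∑' k, (ball (ctr N h k) (rad k)).indicator (fun _ => ENNReal.ofReal (lam p k)) y

lemma FF_mem (N : ℕ) (h : 0 < N) (p : ℝ) {y : EuclideanSpace ℝ (Fin N)} {j : ℕ}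
    (hy : y ∈ ball (ctr N h j) (rad j)) : FF N h p y = ENNReal.ofReal (lam p j) := by
  simp only [FF]
  rw [tsum_eq_single j (fun k hkj => ?_)]
  · rw [indicator_of_mem hy]
  · have hd := balls_disjoint N h hkj
    have : y ∉ ball (ctr N h k) (rad k) := fun hk => (hd.ne_of_mem hk hy) rfl
    rw [indicator_of_notMem this]

lemma FF_not (N : ℕ) (h : 0 < N) (p : ℝ) {y : EuclideanSpace ℝ (Fin N)}
    (hy : ∀ j, y ∉ ball (ctr N h j) (rad j)) : FF N h p y = 0 := by
  simp only [FF]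
  convert tsum_zero with k
  rw [indicator_of_notMem (hy k)]

lemma FF_ne_top (N : ℕ) (h : 0 < N) (p : ℝ) (y : EuclideanSpace ℝ (Fin N)) :
    FF N h p y ≠ ∞ := by
  by_cases hy : ∃ j, y ∈ ball (ctr N h j) (rad j)
  · obtain ⟨j, hj⟩ := hy
    rw [FF_mem N h p hj]; exact ENNReal.ofReal_ne_top
  · push_neg at hy
    rw [FF_not N h p hy]; exact ENNReal.zero_ne_top

lemma FF_meas (N : ℕ) (h : 0 < N) (p : ℝ) : Measurable (FF N h p) :=
  Measurable.ennreal_tsum (fun _ => measurable_const.indicator measurableSet_ball)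

/-- the real-valued function -/
def ff (N : ℕ) (h : 0 < N) (p : ℝ) : EuclideanSpace ℝ (Fin N) → ℝ := fun y =>
  (FF N h p y).toReal

lemma ff_nonneg (N : ℕ) (h : 0 < N) (p : ℝ) (y : EuclideanSpace ℝ (Fin N)) :
    0 ≤ ff N h p y := ENNReal.toReal_nonneg

lemma ff_meas (N : ℕ) (h : 0 < N) (p : ℝ) : Measurable (ff N h p) :=
  (FF_meas N h p).ennreal_toReal

lemma ofReal_ff (N : ℕ) (h : 0 < N) (p : ℝ) (y : EuclideanSpace ℝ (Fin N)) :
    ENNReal.ofReal (ff N h p y) = FF N h p y := by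
  simp only [ff]; rw [ENNReal.ofReal_toReal (FF_ne_top N h p y)]

lemma ff_mem (N : ℕ) (h : 0 < N) (p : ℝ) {y : EuclideanSpace ℝ (Fin N)} {j : ℕ}
    (hy : y ∈ ball (ctr N h j) (rad j)) : ff N h p y = lam p j := by
  simp only [ff]; rw [FF_mem N h p hy, ENNReal.toReal_ofReal (lam_pos p j).le]

lemma ff_support (N : ℕ) (h : 0 < N) (p : ℝ) {y : EuclideanSpace ℝ (Fin N)}
    (hy : y ∉ closedBall (0 : EuclideanSpace ℝ (Fin N)) 2) : ff N h p y = 0 := by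
  simp only [ff]; rw [FF_not N h p, ENNReal.toReal_zero]
  intro j hj
  rw [mem_ball] at hj
  have h1 : dist y (ctr N h j) < 1 := lt_of_lt_of_le hj (by
    have := rad_le' j
    have h2 : (1/2:ℝ)^j ≤ 1 := pow_le_one₀ (by norm_num) (by norm_num)
    linarith)
  have h2 : ‖ctr N h j‖ ≤ 1 := by
    rw [ctr, norm_smul, norm_eVec, mul_one, Real.norm_eq_abs,
      abs_of_nonneg (by positivity)]
    exact pow_le_one₀ (by norm_num) (by norm_num)
  apply hy
  rw [mem_closedBall, dist_zero_right]
  calc ‖y‖ ≤ dist y (ctr N h j) + ‖ctr N h j‖ := by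
        rw [dist_eq_norm]
        simpa using norm_add_le (y - ctr N h j) (ctr N h j)
  _ ≤ 2 := by linarith

lemma ff_hcs (N : ℕ) (h : 0 < N) (p : ℝ) : HasCompactSupport (ff N h p) :=
  HasCompactSupport.intro (isCompact_closedBall _ _) (fun _ hx => ff_support N h p hx)

lemma lintegral_FF (N : ℕ) (h : 0 < N) (p : ℝ) (s : Set (EuclideanSpace ℝ (Fin N)))
    (hs : MeasurableSet s) :
    ∫⁻ y in s, FF N h p y =
      ∑' k, ENNReal.ofReal (lam p k) * volume (ball (ctr N h k) (rad k) ∩ s) := by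
  simp only [FF]
  rw [lintegral_tsum (fun k => (measurable_const.indicator
    (measurableSet_ball (x := ctr N h k) (ε := rad k))).aemeasurable)]
  congr 1
  ext k
  rw [lintegral_indicator measurableSet_ball, setLIntegral_const,
    Measure.restrict_apply measurableSet_ball]

/-- volume of the unit ball -/
def uvol (N : ℕ) : ℝ≥0∞ := volume (ball (0 : EuclideanSpace ℝ (Fin N)) 1)

lemma uvol_ne_top (N : ℕ) : uvol N ≠ ∞ := measure_ball_lt_top.ne

lemma uvol_pos (N : ℕ) : 0 < uvol N := measure_ball_pos _ _ one_pos

lemma omega_pos (N : ℕ) : 0 < (uvol N).toReal :=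
  ENNReal.toReal_pos (uvol_pos N).ne' (uvol_ne_top N)

lemma vol_ball (N : ℕ) (h : 0 < N) (x : EuclideanSpace ℝ (Fin N)) {r : ℝ} (hr : 0 ≤ r) :
    volume (ball x r) = ENNReal.ofReal (r ^ N) * uvol N := by
  haveI : Nontrivial (EuclideanSpace ℝ (Fin N)) :=
    Module.nontrivial_of_finrank_pos (R := ℝ) (by rw [finrank_euclideanSpace_fin]; exact h)
  have := MeasureTheory.Measure.addHaar_ball (μ := volume) x hr
  rw [this, finrank_euclideanSpace_fin]
  rfl

lemma pow_rpow (x : ℝ) (hx : 0 ≤ x) (n : ℕ) (c : ℝ) : ((x^n:ℝ))^c = (x^c)^n := by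
  rw [← Real.rpow_natCast x n, ← Real.rpow_mul hx, mul_comm, Real.rpow_mul hx,
    Real.rpow_natCast]

lemma lam_rad (N : ℕ) (p : ℝ) (k : ℕ) :
    lam p k * rad k ^ N = rad k ^ ((N:ℝ) - p) := by
  rw [lam, ← Real.rpow_natCast (rad k) N, ← Real.rpow_add (rad_pos k)]
  congr 1
  ring

lemma geom_ne_top {t : ℝ≥0∞} (ht : t < 1) : (∑' k:ℕ, t^k) ≠ ∞ := by
  rw [ENNReal.tsum_geometric]
  rw [Ne, ENNReal.inv_eq_top]
  rw [tsub_eq_zero_iff_le]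
  exact not_le.mpr ht

lemma quarter_lt_one {N : ℕ} {p : ℝ} (hpN : p < N) :
    ENNReal.ofReal ((1/4:ℝ)^((N:ℝ)-p)) < 1 := by
  rw [← ENNReal.ofReal_one]
  exact ENNReal.ofReal_lt_ofReal_iff_of_nonneg (Real.rpow_nonneg (by norm_num) _) |>.mpr
    (Real.rpow_lt_one (by norm_num) (by norm_num) (by linarith))

lemma rad_rpow_le (N : ℕ) {p : ℝ} (hpN : p < N) (k : ℕ) :
    rad k ^ ((N:ℝ) - p) ≤ ((1/4:ℝ)^((N:ℝ)-p))^k := by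
  rw [rad, pow_rpow _ (by norm_num)]
  exact pow_le_pow_of_le_one (Real.rpow_nonneg (by norm_num) _)
    (Real.rpow_le_one (by norm_num) (by norm_num) (by linarith)) (by omega)

lemma mass_ne_top (N : ℕ) (h : 0 < N) {p : ℝ} (hpN : p < N) :
    (∫⁻ y, FF N h p y) ≠ ∞ := by
  rw [← setLIntegral_univ, lintegral_FF N h p univ MeasurableSet.univ, ← lt_top_iff_ne_top]
  set t : ℝ≥0∞ := ENNReal.ofReal ((1/4:ℝ)^((N:ℝ)-p)) with ht
  have hb : ∀ k : ℕ, ENNReal.ofReal (lam p k) * volume (ball (ctr N h k) (rad k) ∩ univ)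
      ≤ t^k * uvol N := by
    intro k
    rw [inter_univ, vol_ball N h _ (rad_pos k).le, ← mul_assoc,
      ← ENNReal.ofReal_mul (lam_pos p k).le, lam_rad N p k]
    gcongr
    rw [ht, ← ENNReal.ofReal_pow (Real.rpow_nonneg (by norm_num) _)]
    exact ENNReal.ofReal_le_ofReal (rad_rpow_le N hpN k)
  calc (∑' k, ENNReal.ofReal (lam p k) * volume (ball (ctr N h k) (rad k) ∩ univ))
      ≤ ∑' k, t^k * uvol N := ENNReal.tsum_le_tsum hb
  _ = (∑' k:ℕ, t^k) * uvol N := ENNReal.tsum_mul_right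
  _ < ∞ := (ENNReal.mul_ne_top (geom_ne_top (quarter_lt_one hpN)) (uvol_ne_top N)).lt_top


lemma integrable_ff (N : ℕ) (h : 0 < N) {p : ℝ} (hpN : p < N) :
    Integrable (ff N h p) := by
  refine ⟨(ff_meas N h p).aestronglyMeasurable, ?_⟩
  rw [hasFiniteIntegral_iff_ofReal (Eventually.of_forall (ff_nonneg N h p))]
  rw [lintegral_congr (ofReal_ff N h p)]
  exact (mass_ne_top N h hpN).lt_top

/-- the ENNReal mass of a ball -/
def Gl (N : ℕ) (h : 0 < N) (p : ℝ) (x : EuclideanSpace ℝ (Fin N)) (r : ℝ) : ℝ≥0∞ :=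
  ∫⁻ y in ball x r, FF N h p y

lemma Gl_ne_top (N : ℕ) (h : 0 < N) {p : ℝ} (hpN : p < N)
    (x : EuclideanSpace ℝ (Fin N)) (r : ℝ) : Gl N h p x r ≠ ∞ := by
  intro hc
  exact mass_ne_top N h hpN (top_le_iff.mp (hc ▸ setLIntegral_le_lintegral _ _))

lemma Gl_mono (N : ℕ) (h : 0 < N) (p : ℝ) (x : EuclideanSpace ℝ (Fin N)) :
    Monotone (Gl N h p x) := fun r r' hrr =>
  lintegral_mono_set (ball_subset_ball hrr)

lemma G_eq (N : ℕ) (h : 0 < N) (p : ℝ) (x : EuclideanSpace ℝ (Fin N)) (r : ℝ) :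
    ∫ y in ball x r, ff N h p y = (Gl N h p x r).toReal := by
  rw [integral_eq_lintegral_of_nonneg_ae (Eventually.of_forall (ff_nonneg N h p))
    (ff_meas N h p).aestronglyMeasurable]
  congr 1
  exact lintegral_congr (ofReal_ff N h p)

lemma Gl_eq (N : ℕ) (h : 0 < N) (p : ℝ) (x : EuclideanSpace ℝ (Fin N)) (r : ℝ) :
    Gl N h p x r =
      ∑' k, ENNReal.ofReal (lam p k) * volume (ball (ctr N h k) (rad k) ∩ ball x r) :=
  lintegral_FF N h p _ measurableSet_ball

lemma finset_rpow_le {q : ℝ} (hq0 : 0 < q) (hq1 : q ≤ 1) (a : ℕ → ℝ≥0∞) (s : Finset ℕ) :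
    (∑ k ∈ s, a k) ^ q ≤ ∑ k ∈ s, (a k) ^ q := by
  classical
  induction s using Finset.induction with
  | empty => simp [ENNReal.zero_rpow_of_pos hq0]
  | insert _ _ hx ih =>
    rw [Finset.sum_insert hx, Finset.sum_insert hx]
    exact le_trans (ENNReal.rpow_add_le_add_rpow _ _ hq0.le hq1) (by gcongr)

lemma tsum_rpow_le {q : ℝ} (hq0 : 0 < q) (hq1 : q ≤ 1) (a : ℕ → ℝ≥0∞) :
    (∑' k, a k) ^ q ≤ ∑' k, (a k) ^ q := by
  rw [ENNReal.tsum_eq_iSup_sum]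
  have : (⨆ s : Finset ℕ, ∑ k ∈ s, a k) ^ q
      = ⨆ s : Finset ℕ, (∑ k ∈ s, a k) ^ q := by
    have := OrderIso.map_iSup (ENNReal.orderIsoRpow q hq0) (fun s : Finset ℕ => ∑ k ∈ s, a k)
    simp only [ENNReal.orderIsoRpow_apply] at this
    exact this
  rw [this]
  exact iSup_le fun s => le_trans (finset_rpow_le hq0 hq1 a s) (ENNReal.sum_le_tsum s)

lemma P1 {s T : ℝ} (hs : 0 < s) (hT : 0 < T) :
    ∫⁻ r in Ioc 0 T, ENNReal.ofReal (r ^ (s - 1)) = ENNReal.ofReal (T ^ s / s) := by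
  have hi : IntegrableOn (fun r : ℝ => r ^ (s-1)) (Ioc 0 T) := by
    have := intervalIntegral.intervalIntegrable_rpow' (a:=0) (b:=T) (r:=s-1) (by linarith)
    rwa [intervalIntegrable_iff_integrableOn_Ioc_of_le hT.le] at this
  have nn : 0 ≤ᵐ[volume.restrict (Ioc (0:ℝ) T)] fun r : ℝ => r ^ (s-1) := by
    filter_upwards [ae_restrict_mem measurableSet_Ioc] with r hr
    exact Real.rpow_nonneg hr.1.le _
  rw [← ofReal_integral_eq_lintegral_ofReal hi nn]
  congr 1
  rw [← intervalIntegral.integral_of_le hT.le]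
  rw [integral_rpow (Or.inl (by linarith))]
  rw [Real.zero_rpow (by linarith : s - 1 + 1 ≠ 0)]
  rw [show s - 1 + 1 = s by ring]
  ring

lemma P2 {s T : ℝ} (hs : 0 < s) (hT : 0 < T) :
    ∫⁻ r in Ioi T, ENNReal.ofReal (r ^ (-s - 1)) = ENNReal.ofReal (T ^ (-s) / s) := by
  have hi : IntegrableOn (fun r : ℝ => r ^ (-s-1)) (Ioi T) :=
    integrableOn_Ioi_rpow_of_lt (by linarith) hT
  have nn : 0 ≤ᵐ[volume.restrict (Ioi T)] fun r : ℝ => r ^ (-s-1) := by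
    filter_upwards [ae_restrict_mem measurableSet_Ioi] with r hr
    exact Real.rpow_nonneg (hT.trans hr).le _
  rw [← ofReal_integral_eq_lintegral_ofReal hi nn]
  congr 1
  rw [integral_Ioi_rpow_of_lt (by linarith) hT]
  rw [show -s - 1 + 1 = -s by ring]
  field_simp

/-- the exponent `1/(p-1)` -/
def qq (p : ℝ) : ℝ := 1/(p-1)

/-- the exponent `(N-p)/(p-1)` -/
def al (N : ℕ) (p : ℝ) : ℝ := ((N:ℝ) - p) * qq p

/-- volume of unit ball, real -/
def om (N : ℕ) : ℝ := (uvol N).toReal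

lemma uvol_eq (N : ℕ) : uvol N = ENNReal.ofReal (om N) :=
  (ENNReal.ofReal_toReal (uvol_ne_top N)).symm

lemma om_pos (N : ℕ) : 0 < om N := omega_pos N

section Numbers

variable {N : ℕ} {p : ℝ} (hp : 2 ≤ p) (hpN : p < N)

include hp in
lemma qq_pos : 0 < qq p := by rw [qq]; apply div_pos one_pos; linarith

include hp in
lemma qq_le_one : qq p ≤ 1 := by
  rw [qq, div_le_one (by linarith)]; linarith

include hp in
lemma pqq_pos : 0 < p * qq p := mul_pos (by linarith) (qq_pos hp)

include hp hpN in
lemma al_pos : 0 < al N p := mul_pos (by linarith) (qq_pos hp)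

include hp hpN in
lemma br_lt_one : (1/2:ℝ) ^ (al N p) < 1 :=
  Real.rpow_lt_one (by norm_num) (by norm_num) (al_pos hp hpN)

lemma br_nonneg {N : ℕ} {p : ℝ} : 0 ≤ (1/2:ℝ) ^ (al N p) :=
  Real.rpow_nonneg (by norm_num) _

end Numbers

section Algebra

variable {N : ℕ} {p : ℝ} (hp : 2 ≤ p) (hpN : p < N)

include hp in
lemma alg2 {m r : ℝ} (hm : 0 ≤ m) (hr : 0 < r) :
    (1/r) * ((r ^ (1*p - (N:ℝ)) * m) ^ qq p)
      = m ^ qq p * r ^ ((1*p - (N:ℝ)) * qq p - 1) := by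
  rw [Real.mul_rpow (Real.rpow_nonneg hr.le _) hm, ← Real.rpow_mul hr.le,
    Real.rpow_sub hr, Real.rpow_one]
  ring

include hp in
lemma alg1 {r : ℝ} (hr : 0 < r) (k : ℕ) :
    (1/r) * ((r ^ (1*p - (N:ℝ)) * (lam p k * (r^N * om N))) ^ qq p)
      = (lam p k * om N) ^ qq p * r ^ (p * qq p - 1) := by
  have h0 : r ^ (1*p - (N:ℝ)) * r ^ ((N:ℝ)) = r ^ p := by
    rw [← Real.rpow_add hr]; norm_num
  have h1 : r ^ (1*p - (N:ℝ)) * (lam p k * (r^N * om N))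
      = (lam p k * om N) * r ^ (p:ℝ) := by
    rw [← Real.rpow_natCast r N] at *
    linear_combination (lam p k * om N) * h0
  rw [h1, Real.mul_rpow (mul_nonneg (lam_pos p k).le (om_pos N).le) (Real.rpow_nonneg hr.le _)]
  rw [← Real.rpow_mul hr.le, Real.rpow_sub hr, Real.rpow_one]
  ring

lemma lam_radp (p : ℝ) (k : ℕ) : lam p k * rad k ^ (p:ℝ) = 1 := by
  rw [lam, ← Real.rpow_add (rad_pos k)]
  simp

include hp in
lemma alg3 (k : ℕ) :
    (lam p k * om N) ^ qq p * rad k ^ (p * qq p) = om N ^ qq p := by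
  rw [Real.rpow_mul (rad_pos k).le]
  rw [← Real.mul_rpow (mul_nonneg (lam_pos p k).le (om_pos N).le)
    (Real.rpow_nonneg (rad_pos k).le _)]
  congr 1
  rw [mul_comm (lam p k) (om N), mul_assoc, lam_radp p k, mul_one]

lemma alg4 (k : ℕ) (hq : 0 ≤ qq p) :
    (om N * rad k ^ ((N:ℝ) - p)) ^ qq p * rad k ^ (-(al N p)) = om N ^ qq p := by
  rw [Real.mul_rpow (om_pos N).le (Real.rpow_nonneg (rad_pos k).le _),
    ← Real.rpow_mul (rad_pos k).le, mul_assoc, ← Real.rpow_add (rad_pos k), al]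
  simp

end Algebra

lemma rad_eq_half (k : ℕ) : rad k * ((1/2:ℝ)^k/8)⁻¹ = (1/2:ℝ)^(k+1) := by
  have h1 : (1/2:ℝ)^(2*(k+2)) = (1/2)^(k+1) * ((1/2)^k * (1/2)^3) := by
    ring
  have h2 : ((1/2:ℝ)^k) ≠ 0 := by positivity
  rw [rad, show (1/4:ℝ) = (1/2)^2 by norm_num, ← pow_mul, h1]
  field_simp
  ring

section Bump

variable {N : ℕ} {p : ℝ}

lemma alg5 (hp : 2 ≤ p) (hpN : p < N) (k : ℕ) {d : ℝ} (hd : (1/2:ℝ)^k/4 ≤ d) :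
    (om N * rad k ^ ((N:ℝ)-p)) ^ qq p * ((d/2) ^ (-(al N p)) / al N p)
      ≤ om N ^ qq p / al N p * ((1/2:ℝ)^(al N p))^(k+1) := by
  have h8 : (0:ℝ) < (1/2)^k/8 := by positivity
  have hd2 : (1/2:ℝ)^k/8 ≤ d/2 := by linarith
  have hmono : (d/2)^(-(al N p)) ≤ ((1/2:ℝ)^k/8)^(-(al N p)) :=
    Real.rpow_le_rpow_of_nonpos h8 hd2 (neg_nonpos.mpr (al_pos hp hpN).le)
  have key : (om N * rad k ^ ((N:ℝ)-p)) ^ qq p * ((1/2:ℝ)^k/8)^(-(al N p))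
      = om N ^ qq p * ((1/2:ℝ)^(al N p))^(k+1) := by
    have hal : ((N:ℝ)-p) * qq p = al N p := rfl
    rw [Real.mul_rpow (om_pos N).le (Real.rpow_nonneg (rad_pos k).le _),
      ← Real.rpow_mul (rad_pos k).le, hal]
    rw [Real.rpow_neg h8.le, ← Real.inv_rpow h8.le, mul_assoc,
      ← Real.mul_rpow (rad_pos k).le (inv_nonneg.mpr h8.le)]
    rw [rad_eq_half k, pow_rpow _ (by norm_num) (k+1) (al N p)]
  have hX : (0:ℝ) ≤ (om N * rad k ^ ((N:ℝ)-p)) ^ qq p :=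
    Real.rpow_nonneg (mul_nonneg (om_pos N).le (Real.rpow_nonneg (rad_pos k).le _)) _
  calc (om N * rad k ^ ((N:ℝ)-p)) ^ qq p * ((d/2) ^ (-(al N p)) / al N p)
      ≤ (om N * rad k ^ ((N:ℝ)-p)) ^ qq p * (((1/2:ℝ)^k/8)^(-(al N p)) / al N p) := by
        apply mul_le_mul_of_nonneg_left _ hX
        apply div_le_div_of_nonneg_right hmono (al_pos hp hpN).le
  _ = om N ^ qq p / al N p * ((1/2:ℝ)^(al N p))^(k+1) := by
        rw [mul_div_assoc', key]; ring

/-- single-bump integrand -/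
def bump (N : ℕ) (h : 0 < N) (p : ℝ) (k : ℕ) (x : EuclideanSpace ℝ (Fin N)) (r : ℝ) :
    ℝ≥0∞ :=
  ENNReal.ofReal (1/r) * (ENNReal.ofReal (r ^ (1*p - (N:ℝ))) *
    (ENNReal.ofReal (lam p k) *
      volume (ball (ctr N h k) (rad k) ∩ ball x r))) ^ (qq p)

lemma bump_meas (h : 0 < N) (k : ℕ) (x : EuclideanSpace ℝ (Fin N)) :
    Measurable (bump N h p k x) := by
  apply Measurable.mul
  · exact ENNReal.measurable_ofReal.comp (measurable_const.div measurable_id)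
  · apply Measurable.pow _ measurable_const
    apply Measurable.mul
    · exact ENNReal.measurable_ofReal.comp (measurable_id.pow measurable_const)
    · apply Measurable.const_mul
      have hmono : Monotone (fun r : ℝ => volume (ball (ctr N h k) (rad k) ∩ ball x r)) :=
        fun r r' hrr => measure_mono (inter_subset_inter_right _ (ball_subset_ball hrr))
      exact hmono.measurable

lemma ofReal_chain (hp : 2 ≤ p) {r m : ℝ} (hr : 0 < r) (hm : 0 ≤ m) :
    ENNReal.ofReal (1/r) * (ENNReal.ofReal (r ^ (1*p - (N:ℝ))) * ENNReal.ofReal m) ^ qq p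
      = ENNReal.ofReal ((1/r) * ((r ^ (1*p - (N:ℝ)) * m) ^ qq p)) := by
  rw [← ENNReal.ofReal_mul (Real.rpow_nonneg hr.le _),
    ENNReal.ofReal_rpow_of_nonneg (mul_nonneg (Real.rpow_nonneg hr.le _) hm) (qq_pos hp).le,
    ← ENNReal.ofReal_mul (one_div_nonneg.mpr hr.le)]

lemma bump_le1 (hp : 2 ≤ p) (h : 0 < N) (k : ℕ) (x : EuclideanSpace ℝ (Fin N))
    {r : ℝ} (hr : 0 < r) :
    bump N h p k x r ≤ ENNReal.ofReal ((lam p k * om N) ^ qq p * r ^ (p * qq p - 1)) := by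
  have hm : (0:ℝ) ≤ lam p k * (r^N * om N) :=
    mul_nonneg (lam_pos p k).le (mul_nonneg (pow_nonneg hr.le N) (om_pos N).le)
  have hv : volume (ball (ctr N h k) (rad k) ∩ ball x r)
      ≤ ENNReal.ofReal (r^N * om N) := by
    rw [ENNReal.ofReal_mul (pow_nonneg hr.le N), ← uvol_eq, ← vol_ball N h x hr.le]
    exact measure_mono inter_subset_right
  calc bump N h p k x r
      ≤ ENNReal.ofReal (1/r) * (ENNReal.ofReal (r ^ (1*p - (N:ℝ))) *
          (ENNReal.ofReal (lam p k) * ENNReal.ofReal (r^N * om N))) ^ (qq p) := by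
        unfold bump; gcongr
        exact (qq_pos hp).le
  _ = ENNReal.ofReal ((1/r) * ((r ^ (1*p - (N:ℝ)) * (lam p k * (r^N * om N))) ^ qq p)) := by
        rw [← ENNReal.ofReal_mul (lam_pos p k).le, ofReal_chain hp hr hm]
  _ = ENNReal.ofReal ((lam p k * om N) ^ qq p * r ^ (p * qq p - 1)) := by
        rw [alg1 hp hr k]

lemma bump_le2 (hp : 2 ≤ p) (h : 0 < N) (k : ℕ) (x : EuclideanSpace ℝ (Fin N))
    {r : ℝ} (hr : 0 < r) :
    bump N h p k x r ≤ ENNReal.ofReal ((om N * rad k ^ ((N:ℝ)-p)) ^ qq p *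
      r ^ (-(al N p) - 1)) := by
  have hmm : lam p k * (rad k ^ N * om N) = om N * rad k ^ ((N:ℝ) - p) := by
    rw [← mul_assoc, lam_rad N p k]; ring
  have hm : (0:ℝ) ≤ lam p k * (rad k ^ N * om N) :=
    mul_nonneg (lam_pos p k).le (mul_nonneg (pow_nonneg (rad_pos k).le N) (om_pos N).le)
  have hv : volume (ball (ctr N h k) (rad k) ∩ ball x r)
      ≤ ENNReal.ofReal (rad k ^ N * om N) := by
    rw [ENNReal.ofReal_mul (pow_nonneg (rad_pos k).le N), ← uvol_eq,
      ← vol_ball N h _ (rad_pos k).le]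
    exact measure_mono inter_subset_left
  have he : (1*p - (N:ℝ)) * qq p - 1 = -(al N p) - 1 := by rw [al]; ring
  calc bump N h p k x r
      ≤ ENNReal.ofReal (1/r) * (ENNReal.ofReal (r ^ (1*p - (N:ℝ))) *
          (ENNReal.ofReal (lam p k) * ENNReal.ofReal (rad k ^ N * om N))) ^ (qq p) := by
        unfold bump; gcongr
        exact (qq_pos hp).le
  _ = ENNReal.ofReal ((1/r) * ((r ^ (1*p - (N:ℝ)) * (lam p k * (rad k ^ N * om N))) ^ qq p)) := by
        rw [← ENNReal.ofReal_mul (lam_pos p k).le, ofReal_chain hp hr hm]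
  _ = ENNReal.ofReal ((om N * rad k ^ ((N:ℝ)-p)) ^ qq p * r ^ (-(al N p) - 1)) := by
        rw [alg2 hp hm hr, hmm, he]

lemma bump_zero (hp : 2 ≤ p) (h : 0 < N) (k : ℕ) (x : EuclideanSpace ℝ (Fin N))
    {r : ℝ} (hfar : rad k + r ≤ dist (ctr N h k) x) :
    bump N h p k x r = 0 := by
  have hd : Disjoint (ball (ctr N h k) (rad k)) (ball x r) := ball_disjoint_ball hfar
  rw [bump, hd.inter_eq, measure_empty, mul_zero, mul_zero,
    ENNReal.zero_rpow_of_pos (qq_pos hp), mul_zero]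

end Bump

section TBounds

variable {N : ℕ} {p : ℝ}

lemma T_near (hp : 2 ≤ p) (hpN : p < N) (h : 0 < N) (k : ℕ)
    (x : EuclideanSpace ℝ (Fin N)) :
    ∫⁻ r in Ioi (0:ℝ), bump N h p k x r
      ≤ ENNReal.ofReal (om N ^ qq p / (p * qq p) + om N ^ qq p / al N p) := by
  rw [← Ioc_union_Ioi_eq_Ioi (rad_pos k).le,
    lintegral_union measurableSet_Ioi (Ioc_disjoint_Ioi le_rfl)]
  have hc1 : (0:ℝ) ≤ (lam p k * om N) ^ qq p :=
    Real.rpow_nonneg (mul_nonneg (lam_pos p k).le (om_pos N).le) _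
  have hc2 : (0:ℝ) ≤ (om N * rad k ^ ((N:ℝ)-p)) ^ qq p :=
    Real.rpow_nonneg (mul_nonneg (om_pos N).le (Real.rpow_nonneg (rad_pos k).le _)) _
  have h1 : ∫⁻ r in Ioc (0:ℝ) (rad k), bump N h p k x r
      ≤ ENNReal.ofReal (om N ^ qq p / (p * qq p)) := by
    calc ∫⁻ r in Ioc (0:ℝ) (rad k), bump N h p k x r
        ≤ ∫⁻ r in Ioc (0:ℝ) (rad k),
            ENNReal.ofReal ((lam p k * om N) ^ qq p) * ENNReal.ofReal (r ^ (p * qq p - 1)) := by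
          apply lintegral_mono_ae
          filter_upwards [ae_restrict_mem measurableSet_Ioc] with r hr
          refine le_trans (bump_le1 hp h k x hr.1) ?_
          rw [← ENNReal.ofReal_mul hc1]
    _ = ENNReal.ofReal ((lam p k * om N) ^ qq p)
          * ∫⁻ r in Ioc (0:ℝ) (rad k), ENNReal.ofReal (r ^ (p * qq p - 1)) :=
        lintegral_const_mul' _ _ ENNReal.ofReal_ne_top
    _ = ENNReal.ofReal (om N ^ qq p / (p * qq p)) := by
        rw [P1 (pqq_pos hp) (rad_pos k), ← ENNReal.ofReal_mul hc1,
          mul_div_assoc', alg3 hp k]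
  have h2 : ∫⁻ r in Ioi (rad k), bump N h p k x r
      ≤ ENNReal.ofReal (om N ^ qq p / al N p) := by
    calc ∫⁻ r in Ioi (rad k), bump N h p k x r
        ≤ ∫⁻ r in Ioi (rad k),
            ENNReal.ofReal ((om N * rad k ^ ((N:ℝ)-p)) ^ qq p)
              * ENNReal.ofReal (r ^ (-(al N p) - 1)) := by
          apply lintegral_mono_ae
          filter_upwards [ae_restrict_mem measurableSet_Ioi] with r hr
          refine le_trans (bump_le2 hp h k x ((rad_pos k).trans hr)) ?_
          rw [← ENNReal.ofReal_mul hc2]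
    _ = ENNReal.ofReal ((om N * rad k ^ ((N:ℝ)-p)) ^ qq p)
          * ∫⁻ r in Ioi (rad k), ENNReal.ofReal (r ^ (-(al N p) - 1)) :=
        lintegral_const_mul' _ _ ENNReal.ofReal_ne_top
    _ = ENNReal.ofReal (om N ^ qq p / al N p) := by
        rw [P2 (al_pos hp hpN) (rad_pos k), ← ENNReal.ofReal_mul hc2,
          mul_div_assoc', alg4 k (qq_pos hp).le]
  refine le_trans (add_le_add h1 h2) ?_
  rw [← ENNReal.ofReal_add (div_nonneg (Real.rpow_nonneg (om_pos N).le _) (pqq_pos hp).le)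
    (div_nonneg (Real.rpow_nonneg (om_pos N).le _) (al_pos hp hpN).le)]

lemma T_far (hp : 2 ≤ p) (hpN : p < N) (h : 0 < N) (k : ℕ)
    (x : EuclideanSpace ℝ (Fin N)) (hfar : (1/2:ℝ)^k/4 ≤ dist x (ctr N h k)) :
    ∫⁻ r in Ioi (0:ℝ), bump N h p k x r
      ≤ ENNReal.ofReal (om N ^ qq p / al N p * ((1/2:ℝ)^(al N p))^(k+1)) := by
  set d := dist x (ctr N h k) with hd
  have hd0 : 0 < d := lt_of_lt_of_le (by positivity) hfar
  have hc2 : (0:ℝ) ≤ (om N * rad k ^ ((N:ℝ)-p)) ^ qq p :=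
    Real.rpow_nonneg (mul_nonneg (om_pos N).le (Real.rpow_nonneg (rad_pos k).le _)) _
  rw [← Ioc_union_Ioi_eq_Ioi (half_pos hd0).le,
    lintegral_union measurableSet_Ioi (Ioc_disjoint_Ioi le_rfl)]
  have h1 : ∫⁻ r in Ioc (0:ℝ) (d/2), bump N h p k x r = 0 := by
    rw [← le_zero_iff]
    calc ∫⁻ r in Ioc (0:ℝ) (d/2), bump N h p k x r
        ≤ ∫⁻ _ in Ioc (0:ℝ) (d/2), (0:ℝ≥0∞) := by
          apply lintegral_mono_ae
          filter_upwards [ae_restrict_mem measurableSet_Ioc] with r hr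
          have hrk : rad k + r ≤ dist (ctr N h k) x := by
            rw [dist_comm]
            have := rad_le' k
            have h2 : rad k ≤ d/2 := by linarith
            have := hr.2
            linarith
          rw [bump_zero hp h k x hrk]
    _ = 0 := lintegral_zero
  have h2 : ∫⁻ r in Ioi (d/2), bump N h p k x r
      ≤ ENNReal.ofReal (om N ^ qq p / al N p * ((1/2:ℝ)^(al N p))^(k+1)) := by
    calc ∫⁻ r in Ioi (d/2), bump N h p k x r
        ≤ ∫⁻ r in Ioi (d/2),
            ENNReal.ofReal ((om N * rad k ^ ((N:ℝ)-p)) ^ qq p)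
              * ENNReal.ofReal (r ^ (-(al N p) - 1)) := by
          apply lintegral_mono_ae
          filter_upwards [ae_restrict_mem measurableSet_Ioi] with r hr
          refine le_trans (bump_le2 hp h k x ((half_pos hd0).trans hr)) ?_
          rw [← ENNReal.ofReal_mul hc2]
    _ = ENNReal.ofReal ((om N * rad k ^ ((N:ℝ)-p)) ^ qq p)
          * ∫⁻ r in Ioi (d/2), ENNReal.ofReal (r ^ (-(al N p) - 1)) :=
        lintegral_const_mul' _ _ ENNReal.ofReal_ne_top
    _ ≤ ENNReal.ofReal (om N ^ qq p / al N p * ((1/2:ℝ)^(al N p))^(k+1)) := by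
        rw [P2 (al_pos hp hpN) (half_pos hd0), ← ENNReal.ofReal_mul hc2]
        exact ENNReal.ofReal_le_ofReal (alg5 hp hpN k hfar)
  rw [h1, zero_add]
  exact h2

end TBounds

section Master

variable {N : ℕ} {p : ℝ}

lemma near_subsingleton (h : 0 < N) (x : EuclideanSpace ℝ (Fin N)) :
    Set.Subsingleton {k : ℕ | dist x (ctr N h k) < (1/2:ℝ)^k/4} := by
  intro j hj k hk
  by_contra hjk
  have hd := dist_ctr_ge N h hjk
  have htri : dist (ctr N h j) (ctr N h k) ≤ dist x (ctr N h j) + dist x (ctr N h k) :=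
    dist_triangle_left _ _ _
  simp only [mem_setOf_eq] at hj hk
  have hmj : (1/2:ℝ)^j ≤ (1/2:ℝ)^(min j k) :=
    pow_le_pow_of_le_one (by norm_num) (by norm_num) (min_le_left j k)
  have hmk : (1/2:ℝ)^k ≤ (1/2:ℝ)^(min j k) :=
    pow_le_pow_of_le_one (by norm_num) (by norm_num) (min_le_right j k)
  have hp2 : (1/2:ℝ)^(min j k + 1) = (1/2:ℝ)^(min j k)/2 := by ring
  linarith

lemma tsum_indicator_le {S : Set ℕ} (hS : S.Subsingleton) (c : ℝ≥0∞) :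
    ∑' k, S.indicator (fun _ => c) k ≤ c := by
  by_cases hE : ∃ j, j ∈ S
  · obtain ⟨j, hj⟩ := hE
    calc ∑' k, S.indicator (fun _ => c) k ≤ ∑' k, if k = j then c else 0 := by
          apply ENNReal.tsum_le_tsum
          intro k
          by_cases hk : k ∈ S
          · have hkj := hS hk hj
            subst hkj
            rw [indicator_of_mem hk]
            simp
          · rw [indicator_of_notMem hk]
            exact zero_le
    _ = c := tsum_ite_eq j (fun _ => c)
  · push_neg at hE
    have hz : ∀ k, S.indicator (fun _ => c) k = 0 := fun k => indicator_of_notMem (hE k) _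
    simp [hz]

/-- the wolff integrand -/
def wint (N : ℕ) (p : ℝ) (f : EuclideanSpace ℝ (Fin N) → ℝ)
    (x : EuclideanSpace ℝ (Fin N)) (r : ℝ) : ℝ :=
  (1/r) * ((r ^ (1*p - (N:ℝ)) * ∫ y in ball x r, f y) ^ (1/(p-1)))

lemma wint_meas (h : 0 < N) (p : ℝ) (x : EuclideanSpace ℝ (Fin N)) :
    Measurable (wint N p (ff N h p) x) := by
  have hG : Measurable (fun r : ℝ => ∫ y in ball x r, ff N h p y) := by
    have heq : (fun r : ℝ => ∫ y in ball x r, ff N h p y)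
        = fun r => (Gl N h p x r).toReal := funext (G_eq N h p x)
    rw [heq]
    exact ((Gl_mono N h p x).measurable).ennreal_toReal
  apply Measurable.mul
  · exact measurable_const.div measurable_id
  · exact ((measurable_id.pow measurable_const).mul hG).pow measurable_const

lemma wint_ofReal (hp : 2 ≤ p) (hpN : p < N) (h : 0 < N)
    (x : EuclideanSpace ℝ (Fin N)) {r : ℝ} (hr : 0 < r) :
    ENNReal.ofReal (wint N p (ff N h p) x r)
      = ENNReal.ofReal (1/r) *
          (ENNReal.ofReal (r ^ (1*p - (N:ℝ))) * Gl N h p x r) ^ qq p := by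
  have hG0 : 0 ≤ (Gl N h p x r).toReal := ENNReal.toReal_nonneg
  calc ENNReal.ofReal (wint N p (ff N h p) x r)
      = ENNReal.ofReal (1/r) * (ENNReal.ofReal (r ^ (1*p - (N:ℝ))) *
          ENNReal.ofReal ((Gl N h p x r).toReal)) ^ qq p := by
        rw [wint, G_eq N h p x r]
        exact (ofReal_chain hp hr hG0).symm
  _ = ENNReal.ofReal (1/r) *
        (ENNReal.ofReal (r ^ (1*p - (N:ℝ))) * Gl N h p x r) ^ qq p := by
      rw [ENNReal.ofReal_toReal (Gl_ne_top N h hpN x r)]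

/-- the final constant -/
def AA (N : ℕ) (p : ℝ) : ℝ≥0∞ :=
  ENNReal.ofReal (om N ^ qq p / (p * qq p) + om N ^ qq p / al N p)
    + ENNReal.ofReal (om N ^ qq p / al N p) *
      ((1 - ENNReal.ofReal ((1/2:ℝ) ^ al N p))⁻¹ * ENNReal.ofReal ((1/2:ℝ) ^ al N p))

lemma AA_ne_top (hp : 2 ≤ p) (hpN : p < N) : AA N p ≠ ∞ := by
  have hlt : ENNReal.ofReal ((1/2:ℝ) ^ al N p) < 1 := by
    rw [← ENNReal.ofReal_one]
    exact (ENNReal.ofReal_lt_ofReal_iff_of_nonneg br_nonneg).mpr (br_lt_one hp hpN)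
  have h1 : (1 - ENNReal.ofReal ((1/2:ℝ) ^ al N p))⁻¹ ≠ ∞ := by
    rw [Ne, ENNReal.inv_eq_top, tsub_eq_zero_iff_le]
    exact not_le.mpr hlt
  apply ENNReal.add_ne_top.mpr
  constructor
  · exact ENNReal.ofReal_ne_top
  · exact ENNReal.mul_ne_top ENNReal.ofReal_ne_top
      (ENNReal.mul_ne_top h1 ENNReal.ofReal_ne_top)

lemma master (hp : 2 ≤ p) (hpN : p < N) (h : 0 < N) (x : EuclideanSpace ℝ (Fin N)) :
    ∫⁻ r in Ioi (0:ℝ), ENNReal.ofReal (wint N p (ff N h p) x r) ≤ AA N p := by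
  have hpt : ∀ r ∈ Ioi (0:ℝ), ENNReal.ofReal (wint N p (ff N h p) x r)
      ≤ ∑' k, bump N h p k x r := by
    intro r hr
    rw [wint_ofReal hp hpN h x hr, Gl_eq N h p x r, ← ENNReal.tsum_mul_left]
    calc ENNReal.ofReal (1/r) *
        (∑' k, ENNReal.ofReal (r ^ (1*p - (N:ℝ))) *
          (ENNReal.ofReal (lam p k) *
            volume (ball (ctr N h k) (rad k) ∩ ball x r))) ^ qq p
        ≤ ENNReal.ofReal (1/r) *
          ∑' k, (ENNReal.ofReal (r ^ (1*p - (N:ℝ))) *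
            (ENNReal.ofReal (lam p k) *
              volume (ball (ctr N h k) (rad k) ∩ ball x r))) ^ qq p :=
          mul_le_mul_right (tsum_rpow_le (qq_pos hp) (qq_le_one hp) _) _
    _ = ∑' k, bump N h p k x r := ENNReal.tsum_mul_left.symm
  calc ∫⁻ r in Ioi (0:ℝ), ENNReal.ofReal (wint N p (ff N h p) x r)
      ≤ ∫⁻ r in Ioi (0:ℝ), ∑' k, bump N h p k x r := by
        apply lintegral_mono_ae
        filter_upwards [ae_restrict_mem measurableSet_Ioi] with r hr using hpt r hr
  _ = ∑' k, ∫⁻ r in Ioi (0:ℝ), bump N h p k x r :=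
      lintegral_tsum (fun k => (bump_meas h k x).aemeasurable)
  _ ≤ AA N p := by
      set S := {k : ℕ | dist x (ctr N h k) < (1/2:ℝ)^k/4} with hS
      have hk : ∀ k, ∫⁻ r in Ioi (0:ℝ), bump N h p k x r
          ≤ S.indicator (fun _ => ENNReal.ofReal
              (om N ^ qq p / (p * qq p) + om N ^ qq p / al N p)) k
            + ENNReal.ofReal (om N ^ qq p / al N p) *
                (ENNReal.ofReal ((1/2:ℝ) ^ al N p))^(k+1) := by
        intro k
        by_cases hkS : k ∈ S
        · rw [indicator_of_mem hkS]
          exact le_trans (T_near hp hpN h k x) le_self_add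
        · rw [indicator_of_notMem hkS, zero_add]
          refine le_trans (T_far hp hpN h k x (not_lt.mp hkS)) ?_
          rw [ENNReal.ofReal_mul (div_nonneg (Real.rpow_nonneg (om_pos N).le _)
            (al_pos hp hpN).le), ENNReal.ofReal_pow br_nonneg]
      calc ∑' k, ∫⁻ r in Ioi (0:ℝ), bump N h p k x r
          ≤ ∑' k, (S.indicator (fun _ => ENNReal.ofReal
              (om N ^ qq p / (p * qq p) + om N ^ qq p / al N p)) k
            + ENNReal.ofReal (om N ^ qq p / al N p) *
                (ENNReal.ofReal ((1/2:ℝ) ^ al N p))^(k+1)) := ENNReal.tsum_le_tsum hk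
      _ = (∑' k, S.indicator (fun _ => ENNReal.ofReal
              (om N ^ qq p / (p * qq p) + om N ^ qq p / al N p)) k)
            + ∑' k, ENNReal.ofReal (om N ^ qq p / al N p) *
                (ENNReal.ofReal ((1/2:ℝ) ^ al N p))^(k+1) := ENNReal.tsum_add
      _ ≤ AA N p := by
          rw [AA]
          apply add_le_add (tsum_indicator_le (near_subsingleton h x) _)
          rw [ENNReal.tsum_mul_left]
          apply mul_le_mul_right
          have hgeom : ∀ k : ℕ, (ENNReal.ofReal ((1/2:ℝ) ^ al N p))^(k+1)
              = (ENNReal.ofReal ((1/2:ℝ) ^ al N p))^k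
                * ENNReal.ofReal ((1/2:ℝ) ^ al N p) := fun k => pow_succ _ _
          rw [tsum_congr hgeom, ENNReal.tsum_mul_right, ENNReal.tsum_geometric]

end Master

section Lower

variable {N : ℕ} {p : ℝ}

lemma alg6 (hp : 2 ≤ p) (k : ℕ) :
    (1/(2*rad k)) * (((2*rad k)^(1*p-(N:ℝ)) * (rad k^((N:ℝ)-p) * om N))^qq p) * rad k
      = ((2:ℝ)^(1*p-(N:ℝ)) * om N)^qq p / 2 := by
  have h1 : (2*rad k)^(1*p-(N:ℝ)) = 2^(1*p-(N:ℝ)) * rad k^(1*p-(N:ℝ)) :=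
    Real.mul_rpow (by norm_num) (rad_pos k).le
  have h2 : rad k^(1*p-(N:ℝ)) * rad k^((N:ℝ)-p) = 1 := by
    rw [← Real.rpow_add (rad_pos k)]
    norm_num
  have h3 : (2*rad k)^(1*p-(N:ℝ)) * (rad k^((N:ℝ)-p) * om N) = 2^(1*p-(N:ℝ)) * om N := by
    rw [h1]
    linear_combination (2^(1*p-(N:ℝ)) * om N) * h2
  rw [h3]
  have hrk := rad_pos k
  field_simp

lemma wint_nonneg (h : 0 < N) (p : ℝ) (x : EuclideanSpace ℝ (Fin N)) {r : ℝ}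
    (hr : 0 < r) : 0 ≤ wint N p (ff N h p) x r := by
  apply mul_nonneg (one_div_nonneg.mpr hr.le)
  apply Real.rpow_nonneg
  apply mul_nonneg (Real.rpow_nonneg hr.le _)
  exact setIntegral_nonneg measurableSet_ball (fun y _ => ff_nonneg N h p y)

lemma lower_l (hp : 2 ≤ p) (hpN : p < N) (h : 0 < N) {R : ℝ} (hR : 0 < R) :
    ∃ x, ENNReal.ofReal (((2:ℝ)^(1*p-(N:ℝ)) * om N)^qq p / 2)
      ≤ ∫⁻ r in Ioo (0:ℝ) R, ENNReal.ofReal (wint N p (ff N h p) x r) := by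
  obtain ⟨k, hk⟩ := exists_pow_lt_of_lt_one hR (by norm_num : (1/4:ℝ) < 1)
  have hrad : rad k = (1/4:ℝ)^k/16 := by
    rw [rad, pow_add]; ring
  have hp4 : (0:ℝ) < (1/4)^k := by positivity
  have h2r : 2 * rad k ≤ R := by rw [hrad]; linarith
  have hm0 : (0:ℝ) ≤ rad k^((N:ℝ)-p) * om N :=
    mul_nonneg (Real.rpow_nonneg (rad_pos k).le _) (om_pos N).le
  have hGlow : ∀ r ∈ Ioo (rad k) (2*rad k),
      rad k^((N:ℝ)-p) * om N ≤ ∫ y in ball (ctr N h k) r, ff N h p y := by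
    intro r hr
    have hint : IntegrableOn (ff N h p) (ball (ctr N h k) r) :=
      (integrable_ff N h hpN).integrableOn
    have hsub : ball (ctr N h k) (rad k) ⊆ ball (ctr N h k) r := ball_subset_ball hr.1.le
    have e1 : ∫ y in ball (ctr N h k) (rad k), ff N h p y
        = lam p k * (volume (ball (ctr N h k) (rad k))).toReal := by
      rw [setIntegral_congr_fun measurableSet_ball (fun y hy => ff_mem N h p hy),
        setIntegral_const, smul_eq_mul]
      rw [measureReal_def]
      ring
    have e2 : (volume (ball (ctr N h k) (rad k))).toReal = rad k^N * om N := by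
      rw [vol_ball N h _ (rad_pos k).le, ENNReal.toReal_mul,
        ENNReal.toReal_ofReal (pow_nonneg (rad_pos k).le N)]
      rfl
    have e3 : lam p k * (rad k^N * om N) = rad k^((N:ℝ)-p) * om N := by
      rw [← mul_assoc, lam_rad N p k]
    calc rad k^((N:ℝ)-p) * om N = ∫ y in ball (ctr N h k) (rad k), ff N h p y := by
          rw [e1, e2, e3]
    _ ≤ ∫ y in ball (ctr N h k) r, ff N h p y :=
        setIntegral_mono_set hint (Filter.Eventually.of_forall (ff_nonneg N h p))
          (HasSubset.Subset.eventuallyLE hsub)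
  have hc0 : (0:ℝ) ≤ (1/(2*rad k)) * (((2*rad k)^(1*p-(N:ℝ)) *
      (rad k^((N:ℝ)-p) * om N))^qq p) := by
    apply mul_nonneg (one_div_nonneg.mpr (by linarith [rad_pos k]))
    exact Real.rpow_nonneg (mul_nonneg (Real.rpow_nonneg (by linarith [rad_pos k]) _) hm0) _
  have hwlow : ∀ r ∈ Ioo (rad k) (2*rad k),
      (1/(2*rad k)) * (((2*rad k)^(1*p-(N:ℝ)) * (rad k^((N:ℝ)-p) * om N))^qq p)
        ≤ wint N p (ff N h p) (ctr N h k) r := by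
    intro r hr
    have hr0 : 0 < r := (rad_pos k).trans hr.1
    have hG := hGlow r hr
    have hrp : (2*rad k)^(1*p-(N:ℝ)) ≤ r^(1*p-(N:ℝ)) :=
      Real.rpow_le_rpow_of_nonpos hr0 hr.2.le (by push_cast; nlinarith)
    have hrpn : (0:ℝ) ≤ (2*rad k)^(1*p-(N:ℝ)) :=
      Real.rpow_nonneg (by linarith [rad_pos k]) _
    have hmul : (2*rad k)^(1*p-(N:ℝ)) * (rad k^((N:ℝ)-p) * om N)
        ≤ r^(1*p-(N:ℝ)) * ∫ y in ball (ctr N h k) r, ff N h p y :=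
      mul_le_mul hrp hG hm0 (Real.rpow_nonneg hr0.le _)
    have hq : (((2*rad k)^(1*p-(N:ℝ)) * (rad k^((N:ℝ)-p) * om N))^qq p)
        ≤ ((r^(1*p-(N:ℝ)) * ∫ y in ball (ctr N h k) r, ff N h p y)^qq p) :=
      Real.rpow_le_rpow (mul_nonneg hrpn hm0) hmul (qq_pos hp).le
    have h1r : 1/(2*rad k) ≤ 1/r := one_div_le_one_div_of_le hr0 hr.2.le
    have hqn : (0:ℝ) ≤ (((2*rad k)^(1*p-(N:ℝ)) * (rad k^((N:ℝ)-p) * om N))^qq p) :=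
      Real.rpow_nonneg (mul_nonneg hrpn hm0) _
    exact mul_le_mul h1r hq hqn (one_div_nonneg.mpr hr0.le)
  refine ⟨ctr N h k, ?_⟩
  calc ENNReal.ofReal (((2:ℝ)^(1*p-(N:ℝ)) * om N)^qq p / 2)
      = ENNReal.ofReal ((1/(2*rad k)) * (((2*rad k)^(1*p-(N:ℝ)) *
          (rad k^((N:ℝ)-p) * om N))^qq p)) * ENNReal.ofReal (rad k) := by
        rw [← ENNReal.ofReal_mul hc0, alg6 hp k]
  _ = ∫⁻ _ in Ioo (rad k) (2*rad k), ENNReal.ofReal ((1/(2*rad k)) *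
        (((2*rad k)^(1*p-(N:ℝ)) * (rad k^((N:ℝ)-p) * om N))^qq p)) := by
        rw [setLIntegral_const, Real.volume_Ioo,
          show 2*rad k - rad k = rad k by ring]
  _ ≤ ∫⁻ r in Ioo (rad k) (2*rad k), ENNReal.ofReal (wint N p (ff N h p) (ctr N h k) r) := by
        apply lintegral_mono_ae
        filter_upwards [ae_restrict_mem measurableSet_Ioo] with r hr
        exact ENNReal.ofReal_le_ofReal (hwlow r hr)
  _ ≤ ∫⁻ r in Ioo (0:ℝ) R, ENNReal.ofReal (wint N p (ff N h p) (ctr N h k) r) :=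
        lintegral_mono_set (Ioo_subset_Ioo (rad_pos k).le h2r)

end Lower

end

end KatoAux

open KatoAux

/-- Appendix example: there is a nonnegative compactly supported integrable `f`
with `sup_x W_p^f(x,∞) < ∞` but `lim_{R→0} sup_x W_p^f(x,R) > 0`. -/
theorem kato_counterexample {N : ℕ} (hN : 3 ≤ N) (p : ℝ) (hp : 2 ≤ p) (hpN : p < N) :
    ∃ (f : EuclideanSpace ℝ (Fin N) → ℝ) (a A : ℝ),
      (∀ y, 0 ≤ f y) ∧ HasCompactSupport f ∧ Integrable f ∧
      0 < a ∧ a ≤ A ∧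
      (∀ x, wolffTop N 1 p f x ≤ A) ∧
      (∀ R : ℝ, 0 < R → ∃ x, a ≤ wolff N 1 p f x R) := by
  have h0 : 0 < N := by omega
  refine ⟨ff N h0 p, ((2:ℝ)^(1*p-(N:ℝ)) * om N)^qq p / 2,
    max (((2:ℝ)^(1*p-(N:ℝ)) * om N)^qq p / 2) (AA N p).toReal,
    ff_nonneg N h0 p, ff_hcs N h0 p, integrable_ff N h0 hpN, ?_, le_max_left _ _, ?_, ?_⟩
  · apply div_pos _ two_pos
    apply Real.rpow_pos_of_pos
    exact mul_pos (Real.rpow_pos_of_pos two_pos _) (om_pos N)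
  · intro x
    have hw : wolffTop N 1 p (ff N h0 p) x
        = ∫ r in Set.Ioi (0:ℝ), wint N p (ff N h0 p) x r := rfl
    have hnn : 0 ≤ᵐ[volume.restrict (Set.Ioi (0:ℝ))] wint N p (ff N h0 p) x := by
      filter_upwards [ae_restrict_mem measurableSet_Ioi] with r hr
        using wint_nonneg h0 p x hr
    rw [hw, integral_eq_lintegral_of_nonneg_ae hnn
      ((wint_meas h0 p x).aestronglyMeasurable)]
    exact le_trans (ENNReal.toReal_mono (AA_ne_top hp hpN) (master hp hpN h0 x))
      (le_max_right _ _)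
  · intro R hR
    obtain ⟨x, hx⟩ := lower_l hp hpN h0 hR
    refine ⟨x, ?_⟩
    have hw : wolff N 1 p (ff N h0 p) x R
        = ∫ r in Set.Ioo (0:ℝ) R, wint N p (ff N h0 p) x r := rfl
    have hnn : 0 ≤ᵐ[volume.restrict (Set.Ioo (0:ℝ) R)] wint N p (ff N h0 p) x := by
      filter_upwards [ae_restrict_mem measurableSet_Ioo] with r hr
        using wint_nonneg h0 p x hr.1
    rw [hw, integral_eq_lintegral_of_nonneg_ae hnn
      ((wint_meas h0 p x).aestronglyMeasurable)]
    have hne : (∫⁻ r in Set.Ioo (0:ℝ) R, ENNReal.ofReal (wint N p (ff N h0 p) x r)) ≠ ∞ := by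
      refine ne_top_of_le_ne_top (AA_ne_top hp hpN) (le_trans ?_ (master hp hpN h0 x))
      exact lintegral_mono_set (fun r hr => hr.1)
    exact (ENNReal.ofReal_le_iff_le_toReal hne).mp hx
end
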